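/- Let ρ be a density matrix on ℂ^d ⊗ ℂ^d, let k ≥ 1, and let F = {F_{a|x}} be a steering functional on ℂ^{d^k} with F_{a|x} positive semidefinite (and ω_s(F) > 0). If the fully entangled fraction satisfies F(ρ) > [1 / LV_s(|Ψ_{d^k}^+⟩⟨Ψ_{d^k}^+|, F)]^{1/k}, then ρ^⊗k, viewed as a bipartite state on ℂ^{d^k} ⊗ ℂ^{d^k} by grouping all of Alice's tensor factors together and all of Bob's tensor factors together, is steerable from Alice to Bob: there exists an Alice POVM family on ℂ^{d^k} such that the assemblage induced by ρ^⊗k and this POVM family is not unsteerable. -/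

import Mathlib

open scoped ComplexOrder Kronecker Matrix
open MeasureTheory

noncomputable section

namespace QSteer

/-- Square complex matrices indexed by `ι` (the Hilbert space `ℂ^ι`). -/
abbrev HMat (ι : Type) : Type := Matrix ι ι ℂ

/-- A density matrix: positive semidefinite with unit trace. -/
def IsDensity {ι : Type} [Fintype ι] (ρ : HMat ι) : Prop :=
  ρ.PosSemidef ∧ ρ.trace = 1

/-- A POVM family `{E_{a|x}}`: positive semidefinite effects summing to the identity
for every setting `x`. -/
def IsPOVM {ι A X : Type} [Fintype ι] [Fintype A] [DecidableEq ι]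
    (E : A → X → HMat ι) : Prop :=
  (∀ a x, (E a x).PosSemidef) ∧ ∀ x, ∑ a, E a x = 1

/-- A projective measurement family: a POVM family whose effects are orthogonal
projections. -/
def IsProjPOVM {ι A X : Type} [Fintype ι] [Fintype A] [DecidableEq ι]
    (E : A → X → HMat ι) : Prop :=
  IsPOVM E ∧ ∀ a x, (E a x).IsHermitian ∧ E a x * E a x = E a x

/-- An assemblage `{σ_{a|x}}`: positive semidefinite matrices such that `∑_a σ_{a|x}`
is the same unit-trace matrix for every `x`. -/
def IsAssemblage {ι A X : Type} [Fintype ι] [Fintype A] (σ : A → X → HMat ι) : Prop :=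
  (∀ a x, (σ a x).PosSemidef) ∧ (∀ x x', ∑ a, σ a x = ∑ a, σ a x') ∧
    ∀ x, (∑ a, σ a x).trace = 1

/-- An unsteerable assemblage: one admitting a local-hidden-state model. -/
def IsUnsteerable {ι A X : Type} [Fintype ι] [Fintype A] (σ : A → X → HMat ι) : Prop :=
  ∃ (n : ℕ) (w : Fin n → ℝ) (p : A → X → Fin n → ℝ) (τ : Fin n → HMat ι),
    (∀ l, 0 ≤ w l) ∧ (∑ l, w l = 1) ∧
    (∀ a x l, 0 ≤ p a x l) ∧ (∀ x l, ∑ a, p a x l = 1) ∧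
    (∀ l, IsDensity (τ l)) ∧
    ∀ a x, σ a x = ∑ l, (w l * p a x l) • τ l

/-- A steering functional `{F_{a|x}}`: a family of positive semidefinite matrices. -/
def IsSteeringFunctional {ι A X : Type} [Fintype ι] (F : A → X → HMat ι) : Prop :=
  ∀ a x, (F a x).PosSemidef

/-- The value `∑_{a,x} tr(F_{a|x} σ_{a|x})` (real part). -/
def steeringValue {ι A X : Type} [Fintype ι] [Fintype A] [Fintype X]
    (F σ : A → X → HMat ι) : ℝ :=
  ∑ x, ∑ a, ((F a x * σ a x).trace).re

/-- The steering bound `ω_s(F)`. -/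
def steeringBound {ι A X : Type} [Fintype ι] [Fintype A] [Fintype X]
    (F : A → X → HMat ι) : ℝ :=
  sSup {r : ℝ | ∃ σ : A → X → HMat ι, IsAssemblage σ ∧ IsUnsteerable σ ∧
    r = steeringValue F σ}

/-- The steering fraction `Γ_s(σ, F)`. -/
def steeringFraction {ι A X : Type} [Fintype ι] [Fintype A] [Fintype X]
    (σ F : A → X → HMat ι) : ℝ :=
  steeringValue F σ / steeringBound F

/-- Partial trace over the first (Alice's) tensor factor. -/
def ptraceA {ιA ιB : Type} [Fintype ιA] (M : Matrix (ιA × ιB) (ιA × ιB) ℂ) : HMat ιB :=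
  Matrix.of fun j j' => ∑ i, M (i, j) (i, j')

/-- The assemblage induced by a bipartite state and Alice's POVMs:
`σ_{a|x} = Tr_A[ρ (E_{a|x} ⊗ I)]`. -/
def inducedAssemblage {ιA ιB A X : Type} [Fintype ιA] [Fintype ιB] [DecidableEq ιB]
    (ρ : Matrix (ιA × ιB) (ιA × ιB) ℂ) (E : A → X → HMat ιA) : A → X → HMat ιB :=
  fun a x => ptraceA (ρ * ((E a x) ⊗ₖ (1 : HMat ιB)))

/-- Largest steering-inequality violation `LV_s(ρ, F)` over Alice POVM families. -/
def LVs {ιA ιB A X : Type} [Fintype ιA] [Fintype ιB] [DecidableEq ιA] [DecidableEq ιB]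
    [Fintype A] [Fintype X]
    (ρ : Matrix (ιA × ιB) (ιA × ιB) ℂ) (F : A → X → HMat ιB) : ℝ :=
  sSup {r : ℝ | ∃ E : A → X → HMat ιA, IsPOVM E ∧
    r = steeringFraction (inducedAssemblage ρ E) F}

/-- Largest steering-inequality violation `LV_s^π(ρ, F)` over projective Alice families. -/
def LVsProj {ιA ιB A X : Type} [Fintype ιA] [Fintype ιB] [DecidableEq ιA] [DecidableEq ιB]
    [Fintype A] [Fintype X]
    (ρ : Matrix (ιA × ιB) (ιA × ιB) ℂ) (F : A → X → HMat ιB) : ℝ :=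
  sSup {r : ℝ | ∃ E : A → X → HMat ιA, IsProjPOVM E ∧
    r = steeringFraction (inducedAssemblage ρ E) F}

/-- The maximally entangled state `|Ψ⁺⟩⟨Ψ⁺|` on `ℂ^ι ⊗ ℂ^ι`. -/
def maxEnt (ι : Type) [Fintype ι] [DecidableEq ι] : Matrix (ι × ι) (ι × ι) ℂ :=
  Matrix.of fun pq rs => if pq.1 = pq.2 ∧ rs.1 = rs.2 then ((Fintype.card ι : ℂ))⁻¹ else 0

/-- The fully entangled fraction `F(ρ) = sup_U ⟨Ψ⁺|(U ⊗ I) ρ (U ⊗ I)†|Ψ⁺⟩`. -/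
def fef {ι : Type} [Fintype ι] [DecidableEq ι] (ρ : Matrix (ι × ι) (ι × ι) ℂ) : ℝ :=
  sSup {r : ℝ | ∃ U : Matrix ι ι ℂ, U ∈ Matrix.unitaryGroup ι ℂ ∧
    r = ((maxEnt ι * ((U ⊗ₖ (1 : HMat ι)) * ρ * ((U ⊗ₖ (1 : HMat ι))ᴴ))).trace).re}

/-- A local-hidden-variable (Bell-local) correlation. -/
def IsLHV {A B X Y : Type} [Fintype A] [Fintype B] (P : A → B → X → Y → ℝ) : Prop :=
  ∃ (n : ℕ) (w : Fin n → ℝ) (pA : A → X → Fin n → ℝ) (pB : B → Y → Fin n → ℝ),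
    (∀ l, 0 ≤ w l) ∧ (∑ l, w l = 1) ∧
    (∀ a x l, 0 ≤ pA a x l) ∧ (∀ x l, ∑ a, pA a x l = 1) ∧
    (∀ b y l, 0 ≤ pB b y l) ∧ (∀ y l, ∑ b, pB b y l = 1) ∧
    ∀ a b x y, P a b x y = ∑ l, w l * pA a x l * pB b y l

/-- The Bell value `∑ B_{ab|xy} P(a,b|x,y)`. -/
def bellValue {A B X Y : Type} [Fintype A] [Fintype B] [Fintype X] [Fintype Y]
    (Bf P : A → B → X → Y → ℝ) : ℝ :=
  ∑ x, ∑ y, ∑ a, ∑ b, Bf a b x y * P a b x y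

/-- The local bound `ω(B)`. -/
def localBound {A B X Y : Type} [Fintype A] [Fintype B] [Fintype X] [Fintype Y]
    (Bf : A → B → X → Y → ℝ) : ℝ :=
  sSup {r : ℝ | ∃ P : A → B → X → Y → ℝ, IsLHV P ∧ r = bellValue Bf P}

/-- The nonlocality fraction `Γ(P, B)`. -/
def nonlocalityFraction {A B X Y : Type} [Fintype A] [Fintype B] [Fintype X] [Fintype Y]
    (P Bf : A → B → X → Y → ℝ) : ℝ :=
  bellValue Bf P / localBound Bf

/-- The quantum correlation `P(a,b|x,y) = tr[ρ (E_{a|x} ⊗ E_{b|y})]`. -/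
def quantumCorr {ιA ιB A B X Y : Type} [Fintype ιA] [Fintype ιB]
    (ρ : Matrix (ιA × ιB) (ιA × ιB) ℂ) (EA : A → X → HMat ιA) (EB : B → Y → HMat ιB) :
    A → B → X → Y → ℝ :=
  fun a b x y => ((ρ * ((EA a x) ⊗ₖ (EB b y))).trace).re

/-- Largest Bell-inequality violation `LV(ρ, B)` over pairs of POVM families. -/
def LV {ιA ιB A B X Y : Type} [Fintype ιA] [Fintype ιB] [DecidableEq ιA] [DecidableEq ιB]
    [Fintype A] [Fintype B] [Fintype X] [Fintype Y]
    (ρ : Matrix (ιA × ιB) (ιA × ιB) ℂ) (Bf : A → B → X → Y → ℝ) : ℝ :=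
  sSup {r : ℝ | ∃ (EA : A → X → HMat ιA) (EB : B → Y → HMat ιB),
    IsPOVM EA ∧ IsPOVM EB ∧ r = nonlocalityFraction (quantumCorr ρ EA EB) Bf}

/-- Largest Bell-inequality violation `LV^π(ρ, B)` over pairs of projective families. -/
def LVProj {ιA ιB A B X Y : Type} [Fintype ιA] [Fintype ιB] [DecidableEq ιA] [DecidableEq ιB]
    [Fintype A] [Fintype B] [Fintype X] [Fintype Y]
    (ρ : Matrix (ιA × ιB) (ιA × ιB) ℂ) (Bf : A → B → X → Y → ℝ) : ℝ :=
  sSup {r : ℝ | ∃ (EA : A → X → HMat ιA) (EB : B → Y → HMat ιB),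
    IsProjPOVM EA ∧ IsProjPOVM EB ∧ r = nonlocalityFraction (quantumCorr ρ EA EB) Bf}

/-- The steering functional induced by a Bell functional and Bob's POVMs:
`F_{a|x} = ∑_{b,y} B_{ab|xy} E_{b|y}`. -/
def inducedF {ιB A B X Y : Type} [Fintype B] [Fintype Y]
    (Bf : A → B → X → Y → ℝ) (EB : B → Y → HMat ιB) : A → X → HMat ιB :=
  fun a x => ∑ y, ∑ b, Bf a b x y • EB b y

/-- The `k`-fold tensor power of a bipartite state, regrouped as a bipartite state on
`ℂ^{d^k} ⊗ ℂ^{d^k}` (Alice's factors grouped together, likewise Bob's). -/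
def tensorPower {ι : Type} (ρ : Matrix (ι × ι) (ι × ι) ℂ) (k : ℕ) :
    Matrix ((Fin k → ι) × (Fin k → ι)) ((Fin k → ι) × (Fin k → ι)) ℂ :=
  Matrix.of fun p q => ∏ t, ρ (p.1 t, p.2 t) (q.1 t, q.2 t)

/-- The isotropic state `ρ_iso(p) = p |Ψ⁺⟩⟨Ψ⁺| + (1-p) I/d²` on `ℂ^d ⊗ ℂ^d`. -/
def iso (d : ℕ) (p : ℝ) : Matrix (Fin d × Fin d) (Fin d × Fin d) ℂ :=
  p • maxEnt (Fin d) + ((1 - p) / (d : ℝ) ^ 2) • (1 : Matrix (Fin d × Fin d) (Fin d × Fin d) ℂ)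

/-- `sup_F Γ_s(σ, F)` over positive semidefinite steering functionals with positive
steering bound. -/
def supFrac {ι A X : Type} [Fintype ι] [Fintype A] [Fintype X] (σ : A → X → HMat ι) : ℝ :=
  sSup {r : ℝ | ∃ F : A → X → HMat ι, IsSteeringFunctional F ∧ 0 < steeringBound F ∧
    r = steeringFraction σ F}

/-- The optimal steering fraction `S_O(σ) = max{0, sup_F Γ_s(σ, F) − 1}`. -/
def SO {ι A X : Type} [Fintype ι] [Fintype A] [Fintype X] (σ : A → X → HMat ι) : ℝ :=
  max 0 (supFrac σ - 1)

/-- The steerable weight `S_W(σ)`. -/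
def SW {ι A X : Type} [Fintype ι] [Fintype A] [Fintype X] (σ : A → X → HMat ι) : ℝ :=
  sInf {ν : ℝ | 0 ≤ ν ∧ ν ≤ 1 ∧ ∃ σUS σS : A → X → HMat ι,
    IsAssemblage σUS ∧ IsUnsteerable σUS ∧ IsAssemblage σS ∧
    ∀ a x, σ a x = (1 - ν) • σUS a x + ν • σS a x}

/-- The steering robustness `S_R(σ)`. -/
def SR {ι A X : Type} [Fintype ι] [Fintype A] [Fintype X] (σ : A → X → HMat ι) : ℝ :=
  sInf {ν : ℝ | 0 ≤ ν ∧ ∃ τ : A → X → HMat ι, IsAssemblage τ ∧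
    IsUnsteerable (fun a x => (1 / (1 + ν)) • σ a x + (ν / (1 + ν)) • τ a x)}

/-- Separability of a bipartite state. -/
def IsSeparable {ιA ιB : Type} [Fintype ιA] [Fintype ιB]
    (ρ : Matrix (ιA × ιB) (ιA × ιB) ℂ) : Prop :=
  ∃ (n : ℕ) (w : Fin n → ℝ) (ρA : Fin n → HMat ιA) (ρB : Fin n → HMat ιB),
    (∀ l, 0 ≤ w l) ∧ (∑ l, w l = 1) ∧ (∀ l, IsDensity (ρA l)) ∧ (∀ l, IsDensity (ρB l)) ∧
    ρ = ∑ l, w l • ((ρA l) ⊗ₖ (ρB l))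

/-- The (unnormalized) output assemblage of a one-way LOCC subchannel acting on an
assemblage: `M(σ)_{a'|x'} = K (∑_{a,x} P(x|x') P(a'|x',a,x) σ_{a|x}) K†`. -/
def wired {ι ι₂ A X A' X' : Type} [Fintype ι] [Fintype A] [Fintype X]
    (K : Matrix ι₂ ι ℂ) (Px : X → X' → ℝ) (Pa : A' → X' → A → X → ℝ)
    (σ : A → X → HMat ι) : A' → X' → HMat ι₂ :=
  fun a' x' => K * (∑ x, ∑ a, (Px x x' * Pa a' x' a x) • σ a x) * Kᴴ

instance matMeasurableSpace {m n : Type} : MeasurableSpace (Matrix m n ℂ) :=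
  inferInstanceAs (MeasurableSpace (m → n → ℂ))

/-- The `(U ⊗ U*)`-twirl of a bipartite state with respect to a measure `μ` on the
unitary group (entrywise Bochner integral). -/
def twirl {ι : Type} [Fintype ι] [DecidableEq ι]
    (μ : Measure (Matrix.unitaryGroup ι ℂ)) (ρ : Matrix (ι × ι) (ι × ι) ℂ) :
    Matrix (ι × ι) (ι × ι) ℂ :=
  Matrix.of fun p q =>
    ∫ V : Matrix.unitaryGroup ι ℂ,
      ((((V : Matrix ι ι ℂ)) ⊗ₖ ((V : Matrix ι ι ℂ).map (starRingEnd ℂ))) * ρ *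
        ((((V : Matrix ι ι ℂ)) ⊗ₖ ((V : Matrix ι ι ℂ).map (starRingEnd ℂ)))ᴴ)) p q ∂μ



-- ===== auxiliary lemmas =====
section AuxLemmas
open Complex
set_option linter.unusedSectionVars false

variable {n m : Type} [Fintype n] [Fintype m] [DecidableEq n]

lemma cnonneg_re {z : ℂ} (h : 0 ≤ z) : z = ((z.re : ℝ) : ℂ) ∧ 0 ≤ z.re := by
  rw [Complex.le_def] at h
  simp at h
  exact ⟨by apply Complex.ext <;> simp [h.2.symm], h.1⟩

lemma trace_CC_eq (C : Matrix m n ℂ) :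
    (Cᴴ * C).trace = ((∑ i, ∑ j, Complex.normSq (C i j) : ℝ) : ℂ) := by
  simp only [Matrix.trace, Matrix.diag, Matrix.mul_apply, Matrix.conjTranspose_apply]
  push_cast
  rw [Finset.sum_comm]
  congr 1; ext i; congr 1; ext j
  rw [Complex.normSq_eq_conj_mul_self]
  rfl

lemma trace_psd_pair_shift (A B : Matrix n n ℂ) :
    (Aᴴ * A * (Bᴴ * B)).trace = ((A * Bᴴ)ᴴ * (A * Bᴴ)).trace := by
  calc (Aᴴ * A * (Bᴴ * B)).trace
      = ((Aᴴ * (A * Bᴴ)) * B).trace := by rw [show Aᴴ*A*(Bᴴ*B) = (Aᴴ*(A*Bᴴ))*B by noncomm_ring]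
    _ = (B * (Aᴴ * (A * Bᴴ))).trace := Matrix.trace_mul_comm _ _
    _ = ((B * Aᴴ) * (A * Bᴴ)).trace := by rw [← mul_assoc]
    _ = ((A * Bᴴ)ᴴ * (A * Bᴴ)).trace := by
        rw [Matrix.conjTranspose_mul, Matrix.conjTranspose_conjTranspose]

lemma psd_eq_ct_mul {ι : Type} [Fintype ι] {M : Matrix ι ι ℂ} (h : M.PosSemidef) :
    ∃ B : Matrix ι ι ℂ, M = Bᴴ * B := by
  classical
  open scoped MatrixOrder in
  exact CStarAlgebra.nonneg_iff_eq_star_mul_self.mp h.nonneg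

lemma trace_psd_pair_nonneg {M N : Matrix n n ℂ} (hM : M.PosSemidef) (hN : N.PosSemidef) :
    0 ≤ (M * N).trace := by
  obtain ⟨A, rfl⟩ := psd_eq_ct_mul hM
  obtain ⟨B, rfl⟩ := psd_eq_ct_mul hN
  rw [trace_psd_pair_shift, trace_CC_eq]
  rw [Complex.le_def]
  refine ⟨?_, by simp⟩
  simp only [Complex.zero_re, Complex.ofReal_re]
  refine Finset.sum_nonneg fun i _ => Finset.sum_nonneg fun j _ => Complex.normSq_nonneg _

lemma trace_psd_pair_real {M N : Matrix n n ℂ} (hM : M.PosSemidef) (hN : N.PosSemidef) :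
    (M * N).trace = ((((M * N).trace).re : ℝ) : ℂ) ∧ 0 ≤ ((M * N).trace).re :=
  cnonneg_re (trace_psd_pair_nonneg hM hN)

lemma psd_trace_real {M : Matrix n n ℂ} (hM : M.PosSemidef) :
    M.trace = (((M.trace).re : ℝ) : ℂ) ∧ 0 ≤ (M.trace).re := by
  have := trace_psd_pair_real hM (Matrix.PosSemidef.one (n := n) (R := ℂ))
  rwa [mul_one] at this

lemma trace_psd_pair_le {M N : Matrix n n ℂ} (hM : M.PosSemidef) (hN : N.PosSemidef) :
    ((M * N).trace).re ≤ (M.trace).re * (N.trace).re := by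
  obtain ⟨A, rfl⟩ := psd_eq_ct_mul hM
  obtain ⟨B, rfl⟩ := psd_eq_ct_mul hN
  rw [trace_psd_pair_shift, trace_CC_eq, trace_CC_eq, trace_CC_eq]
  simp only [Complex.ofReal_re]
  have key : ∀ i j : n, Complex.normSq ((A * Bᴴ) i j)
      ≤ (∑ k, Complex.normSq (A i k)) * (∑ k, Complex.normSq (B j k)) := by
    intro i j
    have h1 : ‖(A * Bᴴ) i j‖ ≤ ∑ k, ‖A i k‖ * ‖B j k‖ := by
      rw [Matrix.mul_apply]
      refine (norm_sum_le _ _).trans ?_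
      apply le_of_eq
      congr 1; ext k
      simp [Matrix.conjTranspose_apply, map_mul]
    have h2 : (∑ k, ‖A i k‖ * ‖B j k‖) ^ 2
        ≤ (∑ k, ‖A i k‖ ^ 2) * (∑ k, ‖B j k‖ ^ 2) :=
      Finset.sum_mul_sq_le_sq_mul_sq _ _ _
    calc Complex.normSq ((A * Bᴴ) i j) = ‖(A * Bᴴ) i j‖ ^ 2 := (Complex.sq_norm _).symm
      _ ≤ (∑ k, ‖A i k‖ * ‖B j k‖) ^ 2 := by
          apply pow_le_pow_left₀ (norm_nonneg _) h1
      _ ≤ (∑ k, ‖A i k‖ ^ 2) * (∑ k, ‖B j k‖ ^ 2) := h2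
      _ = (∑ k, Complex.normSq (A i k)) * (∑ k, Complex.normSq (B j k)) := by
          simp [Complex.sq_norm]
  calc ∑ i, ∑ j, Complex.normSq ((A * Bᴴ) i j)
      ≤ ∑ i, ∑ j, (∑ k, Complex.normSq (A i k)) * (∑ k, Complex.normSq (B j k)) := by
        apply Finset.sum_le_sum; intro i _; apply Finset.sum_le_sum; intro j _; exact key i j
    _ = (∑ i, ∑ k, Complex.normSq (A i k)) * (∑ j, ∑ k, Complex.normSq (B j k)) := by
        rw [Finset.sum_mul_sum]

set_option linter.unusedSectionVars false

section Kron
variable {α β : Type} [Fintype α] [Fintype β] [DecidableEq α] [DecidableEq β]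

lemma kron_conjT (A : Matrix α α ℂ) (B : Matrix β β ℂ) : (A ⊗ₖ B)ᴴ = Aᴴ ⊗ₖ Bᴴ := by
  ext ⟨i, j⟩ ⟨k, l⟩
  simp [Matrix.conjTranspose_apply, Matrix.kroneckerMap_apply]

lemma kron_psd {A : Matrix α α ℂ} {B : Matrix β β ℂ} (hA : A.PosSemidef) (hB : B.PosSemidef) :
    (A ⊗ₖ B).PosSemidef := by
  obtain ⟨A', rfl⟩ := psd_eq_ct_mul hA
  obtain ⟨B', rfl⟩ := psd_eq_ct_mul hB
  rw [Matrix.mul_kronecker_mul, ← kron_conjT]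
  exact Matrix.posSemidef_conjTranspose_mul_self _

lemma sum_kron {γ : Type} (s : Finset γ) (f : γ → Matrix α α ℂ) (B : Matrix β β ℂ) :
    (∑ i ∈ s, f i) ⊗ₖ B = ∑ i ∈ s, (f i ⊗ₖ B) := by
  ext ⟨i, j⟩ ⟨k, l⟩
  simp [Matrix.kroneckerMap_apply, Matrix.sum_apply, Finset.sum_mul]

lemma psd_sum {γ : Type} (s : Finset γ) (f : γ → Matrix α α ℂ)
    (h : ∀ i ∈ s, (f i).PosSemidef) : (∑ i ∈ s, f i).PosSemidef := by
  classical
  induction s using Finset.induction_on with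
  | empty => simpa using Matrix.PosSemidef.zero
  | insert a s hnotmem ih =>
    rw [Finset.sum_insert hnotmem]
    exact Matrix.PosSemidef.add (h _ (Finset.mem_insert_self _ _))
      (ih fun i hi => h i (Finset.mem_insert_of_mem hi))

lemma map_conj_conjT (A : Matrix α β ℂ) :
    (A.map (starRingEnd ℂ))ᴴ = Aᴴ.map (starRingEnd ℂ) := by
  ext i j
  simp [Matrix.conjTranspose_apply, Matrix.map_apply]

lemma map_conj_mul (A : Matrix α β ℂ) (B : Matrix β β ℂ) :
    (A * B).map (starRingEnd ℂ) = A.map (starRingEnd ℂ) * B.map (starRingEnd ℂ) := by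
  ext i j
  simp [Matrix.map_apply, Matrix.mul_apply, map_sum]

lemma map_conj_one : (1 : Matrix α α ℂ).map (starRingEnd ℂ) = 1 := by
  ext i j
  simp [Matrix.map_apply, Matrix.one_apply, apply_ite]

lemma map_conj_unitary {W : Matrix α α ℂ} (h : Wᴴ * W = 1) :
    (W.map (starRingEnd ℂ))ᴴ * W.map (starRingEnd ℂ) = 1 := by
  rw [map_conj_conjT, ← map_conj_mul, h, map_conj_one]

end Kron

section ProdSum
variable {k : ℕ}

lemma prod_ite_const (p : Fin k → Prop) [DecidablePred p] (c : ℂ) :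
    (∏ r, if p r then c else 0) = if (∀ r, p r) then c ^ k else 0 := by
  by_cases h : ∀ r, p r
  · simp [h, if_pos, Finset.prod_const]
  · push_neg at h
    obtain ⟨r, hr⟩ := h
    rw [if_neg (by push_neg; exact ⟨r, hr⟩)]
    exact Finset.prod_eq_zero (Finset.mem_univ r) (by simp [hr])

lemma prod_ite_one (p : Fin k → Prop) [DecidablePred p] :
    (∏ r, if p r then (1:ℂ) else 0) = if (∀ r, p r) then 1 else 0 := by
  rw [prod_ite_const, one_pow]

lemma sum_pair_prod {ι ι' : Type} [Fintype ι] [Fintype ι'] (f : Fin k → ι → ι' → ℂ) :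
    ∑ R : (Fin k → ι) × (Fin k → ι'), ∏ r, f r (R.1 r) (R.2 r)
      = ∏ r, ∑ c : ι × ι', f r c.1 c.2 := by
  classical
  rw [show (∏ r, ∑ c : ι × ι', f r c.1 c.2)
      = ∑ g ∈ Fintype.piFinset (fun _ : Fin k => (Finset.univ : Finset (ι × ι'))),
          ∏ r, f r (g r).1 (g r).2 from Finset.prod_univ_sum _ _]
  rw [show Fintype.piFinset (fun _ : Fin k => (Finset.univ : Finset (ι × ι')))
      = (Finset.univ : Finset (Fin k → ι × ι')) from Fintype.piFinset_univ]
  exact (Fintype.sum_equiv (Equiv.arrowProdEquivProdArrow (Fin k) (fun _ => ι) (fun _ => ι'))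
    (fun x => ∏ r, f r (x r).1 (x r).2)
    (fun R => ∏ r, f r (R.1 r) (R.2 r)) (fun x => rfl)).symm

lemma sum_fun_prod {ι : Type} [Fintype ι] (f : Fin k → ι → ℂ) :
    ∑ R : Fin k → ι, ∏ r, f r (R r) = ∏ r, ∑ c : ι, f r c := by
  classical
  rw [show (∏ r, ∑ c : ι, f r c)
      = ∑ g ∈ Fintype.piFinset (fun _ : Fin k => (Finset.univ : Finset ι)),
          ∏ r, f r (g r) from Finset.prod_univ_sum _ _]
  rw [Fintype.piFinset_univ]

end ProdSum


section Weyl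
variable {d : ℕ} [NeZero d]

noncomputable def zeta (d : ℕ) : ℂ := Complex.exp (2 * Real.pi * Complex.I / d)

lemma zeta_prim (d : ℕ) [NeZero d] : IsPrimitiveRoot (zeta d) d :=
  Complex.isPrimitiveRoot_exp d (NeZero.ne d)

lemma zeta_ne_zero (d : ℕ) : zeta d ≠ 0 := Complex.exp_ne_zero _

lemma conj_zeta (d : ℕ) [NeZero d] : (starRingEnd ℂ) (zeta d) = (zeta d)⁻¹ := by
  have h : zeta d * (starRingEnd ℂ) (zeta d) = 1 := by
    rw [zeta, ← Complex.exp_conj, ← Complex.exp_add]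
    rw [show (starRingEnd ℂ) (2 * ↑Real.pi * Complex.I / ↑d) = -(2 * ↑Real.pi * Complex.I / ↑d) by
      simp [map_div₀, map_mul, Complex.conj_I, Complex.conj_ofReal, map_ofNat]
      ring]
    rw [add_neg_cancel, Complex.exp_zero]
  exact eq_inv_of_mul_eq_one_right h

lemma conj_zeta_pow (d : ℕ) [NeZero d] (m : ℕ) :
    (starRingEnd ℂ) (zeta d ^ m) = (zeta d)⁻¹ ^ m := by
  rw [map_pow, conj_zeta]

lemma star_zeta_pow_mul (d : ℕ) [NeZero d] (m : ℕ) : star (zeta d ^ m) * zeta d ^ m = 1 := by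
  have : star (zeta d ^ m) = (starRingEnd ℂ) (zeta d ^ m) := rfl
  rw [this, conj_zeta_pow, inv_pow, inv_mul_cancel₀ (pow_ne_zero _ (zeta_ne_zero d))]

/-- character sum over `Fin d` -/
lemma char_sum (r s : Fin d) :
    ∑ b : Fin d, zeta d ^ (b.val * r.val) * (starRingEnd ℂ) (zeta d ^ (b.val * s.val))
      = if r = s then (d : ℂ) else 0 := by
  have hterm : ∀ b : Fin d, zeta d ^ (b.val * r.val) * (starRingEnd ℂ) (zeta d ^ (b.val * s.val))
      = (zeta d ^ ((r.val : ℤ) - s.val)) ^ b.val := by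
    intro b
    rw [conj_zeta_pow, ← zpow_natCast (zeta d) (b.val * r.val),
      ← zpow_natCast ((zeta d)⁻¹) (b.val * s.val), inv_zpow, ← zpow_neg,
      ← zpow_add₀ (zeta_ne_zero d), ← zpow_natCast (zeta d ^ ((r.val : ℤ) - s.val)),
      ← zpow_mul]
    congr 1
    push_cast
    ring
  simp_rw [hterm]
  rw [Fin.sum_univ_eq_sum_range (fun i => (zeta d ^ ((r.val : ℤ) - s.val)) ^ i) d]
  by_cases h : r = s
  · subst h
    simp
  · rw [if_neg h]
    have hne : zeta d ^ ((r.val : ℤ) - s.val) ≠ 1 := by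
      rw [Ne, (zeta_prim d).zpow_eq_one_iff_dvd]
      intro hdvd
      have : ((r.val : ℤ) - s.val) = 0 := by
        refine Int.eq_zero_of_abs_lt_dvd hdvd ?_
        have h1 : (r.val : ℤ) < d := by exact_mod_cast r.isLt
        have h2 : (s.val : ℤ) < d := by exact_mod_cast s.isLt
        rw [abs_lt]
        omega
      exact h (Fin.ext (by omega))
    rw [geom_sum_eq hne]
    have : (zeta d ^ ((r.val : ℤ) - s.val)) ^ d = 1 := by
      rw [← zpow_natCast (zeta d ^ ((r.val : ℤ) - s.val)) d, ← zpow_mul, mul_comm, zpow_mul,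
        zpow_natCast, (zeta_prim d).pow_eq_one, one_zpow]
    rw [this]
    simp

noncomputable def weyl (d : ℕ) (a b : Fin d) : Matrix (Fin d) (Fin d) ℂ :=
  Matrix.of fun p q => zeta d ^ (b.val * q.val) * (if p = q + a then 1 else 0)

lemma weyl_unitary (a b : Fin d) : (weyl d a b)ᴴ * weyl d a b = 1 := by
  ext p q
  rw [Matrix.mul_apply]
  rw [Finset.sum_eq_single (q + a) (fun m _ hm => by
    simp [weyl, Matrix.conjTranspose_apply, hm]) (fun hm => absurd (Finset.mem_univ _) hm)]
  simp only [weyl, Matrix.conjTranspose_apply, Matrix.of_apply, if_pos rfl, mul_one,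
    Matrix.one_apply]
  by_cases h : p = q
  · subst h
    simpa using star_zeta_pow_mul d (b.val * p.val)
  · rw [if_neg (fun hc : q + a = p + a => h (add_right_cancel hc).symm), if_neg h]
    simp

lemma weyl_star_sum (p q r s : Fin d) :
    ∑ a : Fin d, ∑ b : Fin d, weyl d a b p r * (starRingEnd ℂ) (weyl d a b q s)
      = if p = q ∧ r = s then (d : ℂ) else 0 := by
  have hswap : ∀ a b : Fin d, weyl d a b p r * (starRingEnd ℂ) (weyl d a b q s)
      = (zeta d ^ (b.val * r.val) * (starRingEnd ℂ) (zeta d ^ (b.val * s.val)))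
        * ((if p = r + a then 1 else 0) * (if q = s + a then 1 else 0)) := by
    intro a b
    simp only [weyl, Matrix.of_apply, map_mul]
    have : (starRingEnd ℂ) (if q = s + a then (1:ℂ) else 0) = (if q = s + a then 1 else 0) := by
      split <;> simp
    rw [this]
    ring
  simp_rw [hswap]
  rw [Finset.sum_comm]
  have hb : ∀ b : Fin d, ∑ a : Fin d,
      (zeta d ^ (b.val * r.val) * (starRingEnd ℂ) (zeta d ^ (b.val * s.val)))
        * ((if p = r + a then 1 else 0) * (if q = s + a then 1 else 0))
      = (zeta d ^ (b.val * r.val) * (starRingEnd ℂ) (zeta d ^ (b.val * s.val)))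
        * (if q = s + (p - r) then 1 else 0) := by
    intro b
    rw [← Finset.mul_sum]
    congr 1
    rw [Finset.sum_eq_single (p - r) (fun a _ ha => by
      have hne : ¬ p = r + a := by
        intro hc
        exact ha (by rw [hc]; abel)
      simp [hne]) (fun hm => absurd (Finset.mem_univ _) hm)]
    have hpr : p = r + (p - r) := by abel
    rw [if_pos hpr, one_mul]
  simp_rw [hb]
  rw [← Finset.sum_mul, char_sum]
  by_cases hrs : r = s
  · subst hrs
    rw [if_pos rfl]
    by_cases hpq : p = q
    · subst hpq
      rw [if_pos (by abel), if_pos ⟨rfl, rfl⟩, mul_one]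
    · rw [if_neg (fun hc => hpq (by rw [hc]; abel)), if_neg (fun hc => hpq hc.1), mul_zero]
  · simp [hrs]

end Weyl

end AuxLemmas

section TensorLayer
open Complex
set_option linter.unusedSectionVars false
set_option maxHeartbeats 1000000

variable {d k : ℕ} [NeZero d]

noncomputable def piT (M : Fin k → HMat (Fin d)) : HMat (Fin k → Fin d) :=
  Matrix.of fun P Q => ∏ r, M r (P r) (Q r)

lemma piT_apply (M : Fin k → HMat (Fin d)) (P Q : Fin k → Fin d) :
    piT M P Q = ∏ r, M r (P r) (Q r) := rfl

lemma piT_mul (M N : Fin k → HMat (Fin d)) : piT M * piT N = piT (fun r => M r * N r) := by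
  ext P Q
  rw [Matrix.mul_apply]
  calc ∑ R : Fin k → Fin d, piT M P R * piT N R Q
      = ∑ R : Fin k → Fin d, ∏ r, (M r (P r) (R r) * N r (R r) (Q r)) := by
        refine Finset.sum_congr rfl fun R _ => ?_
        rw [piT_apply, piT_apply, ← Finset.prod_mul_distrib]
    _ = ∏ r, ∑ x : Fin d, M r (P r) x * N r x (Q r) :=
        sum_fun_prod (fun r x => M r (P r) x * N r x (Q r))
    _ = piT (fun r => M r * N r) P Q := by
        rw [piT_apply]
        exact Finset.prod_congr rfl fun r _ => (Matrix.mul_apply).symm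

lemma piT_conjT (M : Fin k → HMat (Fin d)) : (piT M)ᴴ = piT (fun r => (M r)ᴴ) := by
  ext P Q
  rw [Matrix.conjTranspose_apply, piT_apply, piT_apply]
  rw [show star (∏ r, M r (Q r) (P r)) = (starRingEnd ℂ) (∏ r, M r (Q r) (P r)) from rfl,
    map_prod]
  exact Finset.prod_congr rfl fun r _ => rfl

lemma piT_one : piT (fun _ : Fin k => (1 : HMat (Fin d))) = 1 := by
  ext P Q
  rw [piT_apply]
  rw [show (∏ r, (1 : HMat (Fin d)) (P r) (Q r)) = ∏ r, if P r = Q r then (1:ℂ) else 0 from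
    Finset.prod_congr rfl fun r _ => Matrix.one_apply]
  rw [prod_ite_one, Matrix.one_apply]
  exact if_congr funext_iff.symm rfl rfl

lemma piT_unitary {M : Fin k → HMat (Fin d)} (h : ∀ r, (M r)ᴴ * M r = 1) :
    (piT M)ᴴ * piT M = 1 := by
  rw [piT_conjT, piT_mul]
  rw [show (fun r => (M r)ᴴ * M r) = (fun _ : Fin k => (1 : HMat (Fin d))) from funext h]
  exact piT_one

noncomputable def bigW (v : (Fin k → Fin d) × (Fin k → Fin d)) : HMat (Fin k → Fin d) :=
  piT (fun r => weyl d (v.1 r) (v.2 r))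

lemma bigW_unitary (v : (Fin k → Fin d) × (Fin k → Fin d)) : (bigW v)ᴴ * bigW v = 1 :=
  piT_unitary (fun _ => weyl_unitary _ _)

lemma bigW_unitary' (v : (Fin k → Fin d) × (Fin k → Fin d)) : bigW v * (bigW v)ᴴ = 1 :=
  mul_eq_one_comm.mpr (bigW_unitary v)

lemma card_pi_eq : Fintype.card (Fin k → Fin d) = d ^ k := by
  rw [Fintype.card_fun, Fintype.card_fin, Fintype.card_fin]

lemma card_pi_ne_zero : (Fintype.card (Fin k → Fin d) : ℂ) ≠ 0 := by
  rw [card_pi_eq]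
  push_cast
  exact pow_ne_zero _ (Nat.cast_ne_zero.mpr (NeZero.ne d))

lemma bigW_sum :
    ∑ v : (Fin k → Fin d) × (Fin k → Fin d), (bigW v) ⊗ₖ (bigW v).map (starRingEnd ℂ)
      = ((Fintype.card (Fin k → Fin d) : ℂ) ^ 2) • maxEnt (Fin k → Fin d) := by
  ext ⟨P, Q⟩ ⟨R, S⟩
  rw [Matrix.sum_apply]
  have hcond : (∀ r, P r = Q r ∧ R r = S r) ↔ (P = Q ∧ R = S) :=
    ⟨fun h => ⟨funext fun r => (h r).1, funext fun r => (h r).2⟩,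
     fun h r => ⟨congrFun h.1 r, congrFun h.2 r⟩⟩
  calc ∑ v : (Fin k → Fin d) × (Fin k → Fin d),
        ((bigW v) ⊗ₖ (bigW v).map (starRingEnd ℂ)) (P, Q) (R, S)
      = ∑ v : (Fin k → Fin d) × (Fin k → Fin d), ∏ r,
          (weyl d (v.1 r) (v.2 r) (P r) (R r)
            * (starRingEnd ℂ) (weyl d (v.1 r) (v.2 r) (Q r) (S r))) := by
        refine Finset.sum_congr rfl fun v _ => ?_
        rw [Matrix.kroneckerMap_apply, Matrix.map_apply, bigW, piT_apply, piT_apply, map_prod,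
          ← Finset.prod_mul_distrib]
    _ = ∏ r, ∑ c : Fin d × Fin d, weyl d c.1 c.2 (P r) (R r)
          * (starRingEnd ℂ) (weyl d c.1 c.2 (Q r) (S r)) :=
        sum_pair_prod (fun r a b => weyl d a b (P r) (R r)
          * (starRingEnd ℂ) (weyl d a b (Q r) (S r)))
    _ = ∏ r, (if P r = Q r ∧ R r = S r then (d:ℂ) else 0) := by
        refine Finset.prod_congr rfl fun r _ => ?_
        rw [Fintype.sum_prod_type]
        exact weyl_star_sum _ _ _ _
    _ = if (∀ r, P r = Q r ∧ R r = S r) then (d:ℂ)^k else 0 := prod_ite_const _ _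
    _ = (((Fintype.card (Fin k → Fin d) : ℂ)) ^ 2 • maxEnt (Fin k → Fin d)) (P,Q) (R,S) := by
        rw [Matrix.smul_apply, maxEnt, Matrix.of_apply, smul_eq_mul]
        by_cases hc : P = Q ∧ R = S
        · rw [if_pos (hcond.mpr hc), if_pos hc]
          have hcard : (Fintype.card (Fin k → Fin d) : ℂ) = (d:ℂ)^k := by
            rw [card_pi_eq]; push_cast; rfl
          rw [hcard, pow_two]
          field_simp
        · rw [if_neg (fun hh => hc (hcond.mp hh)), if_neg hc, mul_zero]

end TensorLayer

section MaxEntLemmas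
open Complex
set_option linter.unusedSectionVars false
set_option maxHeartbeats 1000000
variable {ι : Type} [Fintype ι] [DecidableEq ι]

lemma maxEnt_apply (p q : ι × ι) :
    maxEnt ι p q = if p.1 = p.2 ∧ q.1 = q.2 then ((Fintype.card ι : ℂ))⁻¹ else 0 := rfl

lemma maxEnt_conjT : (maxEnt ι)ᴴ = maxEnt ι := by
  ext p q
  rw [Matrix.conjTranspose_apply, maxEnt_apply q p, maxEnt_apply p q]
  by_cases h1 : p.1 = p.2 <;> by_cases h2 : q.1 = q.2 <;>
    simp [h1, h2, star_inv₀, and_comm]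

lemma maxEnt_psd : (maxEnt ι).PosSemidef := by
  rw [Matrix.posSemidef_iff_dotProduct_mulVec]
  constructor
  · exact maxEnt_conjT
  · intro x
    have hinner : ∀ p : ι × ι, ((maxEnt ι) *ᵥ x) p
        = if p.1 = p.2 then ((Fintype.card ι : ℂ))⁻¹ * ∑ i, x (i, i) else 0 := by
      intro p
      rw [Matrix.mulVec, dotProduct, Fintype.sum_prod_type]
      by_cases hp : p.1 = p.2
      · rw [if_pos hp, Finset.mul_sum]
        refine Finset.sum_congr rfl fun q1 _ => ?_
        rw [Finset.sum_eq_single q1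
          (fun q2 _ hq2 => by
            rw [maxEnt_apply p (q1, q2), if_neg (fun hh => hq2 hh.2.symm), zero_mul])
          (fun hm => absurd (Finset.mem_univ _) hm)]
        rw [maxEnt_apply p (q1, q1), if_pos ⟨hp, rfl⟩]
      · rw [if_neg hp]
        refine Finset.sum_eq_zero fun q1 _ => Finset.sum_eq_zero fun q2 _ => ?_
        rw [maxEnt_apply p (q1, q2), if_neg (fun hh => hp hh.1), zero_mul]
    have key : star x ⬝ᵥ ((maxEnt ι) *ᵥ x)
        = ((Fintype.card ι : ℂ))⁻¹ * ((starRingEnd ℂ) (∑ i, x (i, i)) * (∑ i, x (i, i))) := by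
      rw [dotProduct]
      calc ∑ p : ι × ι, star x p * ((maxEnt ι) *ᵥ x) p
          = ∑ p : ι × ι, star (x p) *
              (if p.1 = p.2 then ((Fintype.card ι : ℂ))⁻¹ * ∑ i, x (i, i) else 0) := by
            refine Finset.sum_congr rfl fun p _ => ?_
            rw [hinner p]
            rfl
        _ = ∑ i : ι, star (x (i, i)) * (((Fintype.card ι : ℂ))⁻¹ * ∑ j, x (j, j)) := by
            rw [Fintype.sum_prod_type]
            refine Finset.sum_congr rfl fun i _ => ?_
            rw [Finset.sum_eq_single i
              (fun j _ hj => by rw [if_neg (fun hh : i = j => hj hh.symm), mul_zero])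
              (fun hm => absurd (Finset.mem_univ _) hm)]
            rw [if_pos rfl]
        _ = ((Fintype.card ι : ℂ))⁻¹ * ((starRingEnd ℂ) (∑ i, x (i, i)) * (∑ i, x (i, i))) := by
            rw [← Finset.sum_mul, ← star_sum]
            have hstar : star (∑ i, x (i, i)) = (starRingEnd ℂ) (∑ i, x (i, i)) := rfl
            rw [hstar]
            ring
    rw [key, ← Complex.normSq_eq_conj_mul_self]
    have hcast : ((Fintype.card ι : ℂ))⁻¹ * ((Complex.normSq (∑ i, x (i, i)) : ℝ) : ℂ)
        = ((((Fintype.card ι : ℝ))⁻¹ * Complex.normSq (∑ i, x (i, i)) : ℝ) : ℂ) := by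
      push_cast
      ring
    rw [hcast, Complex.le_def]
    refine ⟨?_, by simp⟩
    simp only [Complex.zero_re, Complex.ofReal_re]
    exact mul_nonneg (by positivity) (Complex.normSq_nonneg _)

lemma maxEnt_mul_self (h : (Fintype.card ι : ℂ) ≠ 0) : maxEnt ι * maxEnt ι = maxEnt ι := by
  ext ⟨p1, p2⟩ ⟨r1, r2⟩
  rw [Matrix.mul_apply]
  by_cases hp : p1 = p2
  · by_cases hr : r1 = r2
    · calc ∑ u : ι × ι, maxEnt ι (p1, p2) u * maxEnt ι u (r1, r2)
          = ∑ u1 : ι, ∑ u2 : ι, (if u1 = u2 then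
              ((Fintype.card ι : ℂ))⁻¹ * ((Fintype.card ι : ℂ))⁻¹ else 0) := by
            rw [Fintype.sum_prod_type]
            refine Finset.sum_congr rfl fun u1 _ => Finset.sum_congr rfl fun u2 _ => ?_
            rw [maxEnt_apply (p1, p2) (u1, u2), maxEnt_apply (u1, u2) (r1, r2)]
            by_cases hu : u1 = u2
            · rw [if_pos hu, if_pos ⟨hp, hu⟩, if_pos ⟨hu, hr⟩]
            · rw [if_neg hu, if_neg (fun hh => hu hh.2), zero_mul]
        _ = maxEnt ι (p1, p2) (r1, r2) := by
            have : ∀ u1 : ι, ∑ u2 : ι, (if u1 = u2 then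
                ((Fintype.card ι : ℂ))⁻¹ * ((Fintype.card ι : ℂ))⁻¹ else 0)
                = ((Fintype.card ι : ℂ))⁻¹ * ((Fintype.card ι : ℂ))⁻¹ := by
              intro u1
              rw [Finset.sum_eq_single u1 (fun u2 _ hu2 => by
                rw [if_neg (fun hh => hu2 hh.symm)])
                (fun hm => absurd (Finset.mem_univ _) hm), if_pos rfl]
            simp_rw [this]
            rw [Finset.sum_const, maxEnt_apply (p1, p2) (r1, r2), if_pos ⟨hp, hr⟩,
              Finset.card_univ, nsmul_eq_mul]
            field_simp
    · rw [Finset.sum_eq_zero (fun u _ => by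
        rw [maxEnt_apply u (r1, r2), if_neg (fun hh => hr hh.2), mul_zero]),
        maxEnt_apply (p1, p2) (r1, r2), if_neg (fun hh => hr hh.2)]
  · rw [Finset.sum_eq_zero (fun u _ => by
      rw [maxEnt_apply (p1, p2) u, if_neg (fun hh => hp hh.1), zero_mul]),
      maxEnt_apply (p1, p2) (r1, r2), if_neg (fun hh => hp hh.1)]

lemma maxEnt_sandwich (M : Matrix (ι × ι) (ι × ι) ℂ) :
    maxEnt ι * M * maxEnt ι = (maxEnt ι * M).trace • maxEnt ι := by
  have hent : ∀ (p q : ι) (u : ι × ι),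
      (maxEnt ι * M) (p, q) u = if p = q then
        ((Fintype.card ι : ℂ))⁻¹ * ∑ a : ι, M (a, a) u else 0 := by
    intro p q u
    rw [Matrix.mul_apply, Fintype.sum_prod_type]
    by_cases hp : p = q
    · rw [if_pos hp, Finset.mul_sum]
      refine Finset.sum_congr rfl fun a _ => ?_
      rw [Finset.sum_eq_single a
        (fun b _ hb => by
          rw [maxEnt_apply (p, q) (a, b), if_neg (fun hh => hb hh.2.symm), zero_mul])
        (fun hm => absurd (Finset.mem_univ _) hm)]
      rw [maxEnt_apply (p, q) (a, a), if_pos ⟨hp, rfl⟩]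
    · rw [if_neg hp]
      refine Finset.sum_eq_zero fun a _ => Finset.sum_eq_zero fun b _ => ?_
      rw [maxEnt_apply (p, q) (a, b), if_neg (fun hh => hp hh.1), zero_mul]
  have htr : (maxEnt ι * M).trace
      = ((Fintype.card ι : ℂ))⁻¹ * ∑ c : ι, ∑ a : ι, M (a, a) (c, c) := by
    rw [Matrix.trace, Fintype.sum_prod_type]
    calc ∑ c1 : ι, ∑ c2 : ι, Matrix.diag (maxEnt ι * M) (c1, c2)
        = ∑ c1 : ι, ((Fintype.card ι : ℂ))⁻¹ * ∑ a : ι, M (a, a) (c1, c1) := by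
          refine Finset.sum_congr rfl fun c1 _ => ?_
          rw [Finset.sum_eq_single c1
            (fun c2 _ hc2 => by
              show (maxEnt ι * M) (c1, c2) (c1, c2) = 0
              rw [hent c1 c2 (c1, c2), if_neg (fun hh => hc2 hh.symm)])
            (fun hm => absurd (Finset.mem_univ _) hm)]
          show (maxEnt ι * M) (c1, c1) (c1, c1) = _
          rw [hent c1 c1 (c1, c1), if_pos rfl]
      _ = ((Fintype.card ι : ℂ))⁻¹ * ∑ c : ι, ∑ a : ι, M (a, a) (c, c) := by
          rw [Finset.mul_sum]
  ext ⟨p1, p2⟩ ⟨r1, r2⟩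
  rw [Matrix.smul_apply, Matrix.mul_apply, htr, maxEnt_apply (p1, p2) (r1, r2), smul_eq_mul]
  by_cases hp : p1 = p2
  · by_cases hr : r1 = r2
    · calc ∑ u : ι × ι, (maxEnt ι * M) (p1, p2) u * maxEnt ι u (r1, r2)
          = ∑ u1 : ι, ∑ u2 : ι, (if u1 = u2 then
              (((Fintype.card ι : ℂ))⁻¹ * ∑ a : ι, M (a, a) (u1, u2))
                * ((Fintype.card ι : ℂ))⁻¹ else 0) := by
            rw [Fintype.sum_prod_type]
            refine Finset.sum_congr rfl fun u1 _ => Finset.sum_congr rfl fun u2 _ => ?_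
            rw [hent p1 p2 (u1, u2), maxEnt_apply (u1, u2) (r1, r2), if_pos hp]
            by_cases hu : u1 = u2
            · rw [if_pos hu, if_pos ⟨hu, hr⟩]
            · rw [if_neg (fun hh => hu hh.1), mul_zero, if_neg hu]
        _ = ∑ u1 : ι, (((Fintype.card ι : ℂ))⁻¹ * ∑ a : ι, M (a, a) (u1, u1))
              * ((Fintype.card ι : ℂ))⁻¹ := by
            refine Finset.sum_congr rfl fun u1 _ => ?_
            rw [Finset.sum_eq_single u1 (fun u2 _ hu2 => by rw [if_neg (fun hh => hu2 hh.symm)])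
              (fun hm => absurd (Finset.mem_univ _) hm), if_pos rfl]
        _ = (((Fintype.card ι : ℂ))⁻¹ * ∑ c : ι, ∑ a : ι, M (a, a) (c, c))
              * ((Fintype.card ι : ℂ))⁻¹ := by
            rw [← Finset.sum_mul, ← Finset.mul_sum]
        _ = ((Fintype.card ι : ℂ))⁻¹ * (∑ c : ι, ∑ a : ι, M (a, a) (c, c))
              * (if p1 = p2 ∧ r1 = r2 then ((Fintype.card ι : ℂ))⁻¹ else 0) := by
            rw [if_pos ⟨hp, hr⟩]
    · rw [if_neg (fun hh => hr hh.2), mul_zero]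
      refine Finset.sum_eq_zero fun u _ => ?_
      rw [maxEnt_apply u (r1, r2), if_neg (fun hh => hr hh.2), mul_zero]
  · rw [if_neg (fun hh => hp hh.1), mul_zero]
    refine Finset.sum_eq_zero fun u _ => ?_
    have hz : (maxEnt ι * M) (p1, p2) u = 0 := by
      rw [hent p1 p2 u, if_neg hp]
    rw [hz, zero_mul]

lemma maxEnt_invL {W : HMat ι} (h : W * Wᴴ = 1) :
    (W ⊗ₖ W.map (starRingEnd ℂ)) * maxEnt ι = maxEnt ι := by
  ext ⟨p1, p2⟩ ⟨r1, r2⟩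
  rw [Matrix.mul_apply, maxEnt_apply (p1, p2) (r1, r2)]
  by_cases hr : r1 = r2
  · calc ∑ u : ι × ι, (W ⊗ₖ W.map (starRingEnd ℂ)) (p1, p2) u * maxEnt ι u (r1, r2)
        = ∑ u1 : ι, ∑ u2 : ι, (if u1 = u2 then
            W p1 u1 * (starRingEnd ℂ) (W p2 u2) * ((Fintype.card ι : ℂ))⁻¹ else 0) := by
          rw [Fintype.sum_prod_type]
          refine Finset.sum_congr rfl fun u1 _ => Finset.sum_congr rfl fun u2 _ => ?_
          rw [Matrix.kroneckerMap_apply, Matrix.map_apply, maxEnt_apply (u1, u2) (r1, r2)]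
          by_cases hu : u1 = u2
          · rw [if_pos hu, if_pos ⟨hu, hr⟩]
          · rw [if_neg hu, if_neg (fun hh => hu hh.1), mul_zero]
      _ = ∑ u1 : ι, W p1 u1 * (starRingEnd ℂ) (W p2 u1) * ((Fintype.card ι : ℂ))⁻¹ := by
          refine Finset.sum_congr rfl fun u1 _ => ?_
          rw [Finset.sum_eq_single u1 (fun u2 _ hu2 => by rw [if_neg (fun hh => hu2 hh.symm)])
            (fun hm => absurd (Finset.mem_univ _) hm), if_pos rfl]
      _ = (W * Wᴴ) p1 p2 * ((Fintype.card ι : ℂ))⁻¹ := by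
          rw [Matrix.mul_apply, Finset.sum_mul]
          refine Finset.sum_congr rfl fun u1 _ => ?_
          rw [Matrix.conjTranspose_apply]
          rfl
      _ = if p1 = p2 ∧ r1 = r2 then ((Fintype.card ι : ℂ))⁻¹ else 0 := by
          rw [h, Matrix.one_apply]
          by_cases hp : p1 = p2
          · rw [if_pos hp, if_pos ⟨hp, hr⟩, one_mul]
          · rw [if_neg hp, if_neg (fun hh => hp hh.1), zero_mul]
  · rw [if_neg (fun hh => hr hh.2)]
    refine Finset.sum_eq_zero fun u _ => ?_
    rw [maxEnt_apply u (r1, r2), if_neg (fun hh => hr hh.2), mul_zero]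

lemma maxEnt_invR {W : HMat ι} (h : Wᴴ * W = 1) :
    maxEnt ι * (W ⊗ₖ W.map (starRingEnd ℂ)) = maxEnt ι := by
  have h1 : (W ⊗ₖ W.map (starRingEnd ℂ))ᴴ = Wᴴ ⊗ₖ (Wᴴ).map (starRingEnd ℂ) := by
    rw [kron_conjT, map_conj_conjT]
  have h2 : Wᴴ * (Wᴴ)ᴴ = 1 := by rwa [Matrix.conjTranspose_conjTranspose]
  have h3 := congrArg Matrix.conjTranspose (maxEnt_invL (W := Wᴴ) h2)
  rwa [Matrix.conjTranspose_mul, maxEnt_conjT, ← h1,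
    Matrix.conjTranspose_conjTranspose] at h3

end MaxEntLemmas

section TPowLemmas
open Complex
set_option linter.unusedSectionVars false
set_option maxHeartbeats 1000000
variable {γ : Type} [Fintype γ] {k : ℕ}

lemma tpow_apply (M : Matrix (γ × γ) (γ × γ) ℂ) (p q : (Fin k → γ) × (Fin k → γ)) :
    tensorPower M k p q = ∏ t, M (p.1 t, p.2 t) (q.1 t, q.2 t) := rfl

lemma tpow_mul (M N : Matrix (γ × γ) (γ × γ) ℂ) :
    tensorPower (M * N) k = tensorPower M k * tensorPower N k := by
  ext p q
  rw [Matrix.mul_apply]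
  calc tensorPower (M * N) k p q
      = ∏ t, ∑ c : γ × γ, M (p.1 t, p.2 t) c * N c (q.1 t, q.2 t) := by
        rw [tpow_apply (M * N) p q]
        exact Finset.prod_congr rfl fun t _ => Matrix.mul_apply
    _ = ∑ R : (Fin k → γ) × (Fin k → γ),
          ∏ t, (M (p.1 t, p.2 t) (R.1 t, R.2 t) * N (R.1 t, R.2 t) (q.1 t, q.2 t)) :=
        (sum_pair_prod (fun t a b => M (p.1 t, p.2 t) (a, b) * N (a, b) (q.1 t, q.2 t))).symm
    _ = ∑ R : (Fin k → γ) × (Fin k → γ), tensorPower M k p R * tensorPower N k R q := by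
        refine Finset.sum_congr rfl fun R _ => ?_
        rw [tpow_apply M p R, tpow_apply N R q, ← Finset.prod_mul_distrib]

lemma tpow_conjT (M : Matrix (γ × γ) (γ × γ) ℂ) :
    (tensorPower M k)ᴴ = tensorPower Mᴴ k := by
  ext p q
  rw [Matrix.conjTranspose_apply, tpow_apply M q p, tpow_apply Mᴴ p q,
    show star (∏ t, M (q.1 t, q.2 t) (p.1 t, p.2 t))
      = (starRingEnd ℂ) (∏ t, M (q.1 t, q.2 t) (p.1 t, p.2 t)) from rfl, map_prod]
  exact Finset.prod_congr rfl fun t _ => rfl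

lemma tpow_trace (M : Matrix (γ × γ) (γ × γ) ℂ) :
    (tensorPower M k).trace = M.trace ^ k := by
  calc (tensorPower M k).trace
      = ∑ R : (Fin k → γ) × (Fin k → γ), ∏ t, M (R.1 t, R.2 t) (R.1 t, R.2 t) := rfl
    _ = ∏ t : Fin k, ∑ c : γ × γ, M (c.1, c.2) (c.1, c.2) :=
        sum_pair_prod (fun _ a b => M (a, b) (a, b))
    _ = ∏ _t : Fin k, M.trace := by
        refine Finset.prod_congr rfl fun t _ => ?_
        exact Finset.sum_congr rfl fun c _ => rfl
    _ = M.trace ^ k := by rw [Finset.prod_const, Finset.card_univ, Fintype.card_fin]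

lemma tpow_psd {M : Matrix (γ × γ) (γ × γ) ℂ} (h : M.PosSemidef) :
    (tensorPower M k).PosSemidef := by
  obtain ⟨B, rfl⟩ := psd_eq_ct_mul h
  rw [tpow_mul, ← tpow_conjT]
  exact Matrix.posSemidef_conjTranspose_mul_self _

variable {d : ℕ} [NeZero d]

lemma tpow_maxEnt : tensorPower (maxEnt (Fin d)) k = maxEnt (Fin k → Fin d) := by
  ext p q
  rw [tpow_apply (maxEnt (Fin d)) p q, maxEnt_apply p q]
  have hval : ((d:ℂ)⁻¹) ^ k = ((Fintype.card (Fin k → Fin d) : ℂ))⁻¹ := by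
    rw [inv_pow, card_pi_eq]
    push_cast
    rfl
  have hcond : (∀ t, p.1 t = p.2 t ∧ q.1 t = q.2 t) ↔ (p.1 = p.2 ∧ q.1 = q.2) :=
    ⟨fun h => ⟨funext fun t => (h t).1, funext fun t => (h t).2⟩,
     fun h t => ⟨congrFun h.1 t, congrFun h.2 t⟩⟩
  calc ∏ t, maxEnt (Fin d) (p.1 t, p.2 t) (q.1 t, q.2 t)
      = ∏ t, (if p.1 t = p.2 t ∧ q.1 t = q.2 t then ((d:ℂ))⁻¹ else 0) := by
        refine Finset.prod_congr rfl fun t _ => ?_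
        rw [maxEnt_apply (p.1 t, p.2 t) (q.1 t, q.2 t), Fintype.card_fin]
    _ = if (∀ t, p.1 t = p.2 t ∧ q.1 t = q.2 t) then ((d:ℂ)⁻¹) ^ k else 0 :=
        prod_ite_const _ _
    _ = if p.1 = p.2 ∧ q.1 = q.2 then ((Fintype.card (Fin k → Fin d) : ℂ))⁻¹ else 0 := by
        rw [hval]
        exact if_congr hcond rfl rfl

lemma tpow_kron_one (U : HMat (Fin d)) :
    tensorPower (U ⊗ₖ (1 : HMat (Fin d))) k
      = (piT (fun _ : Fin k => U)) ⊗ₖ (1 : HMat (Fin k → Fin d)) := by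
  ext p q
  rw [tpow_apply _ p q, Matrix.kroneckerMap_apply, piT_apply, Matrix.one_apply]
  calc ∏ t, (U ⊗ₖ (1 : HMat (Fin d))) (p.1 t, p.2 t) (q.1 t, q.2 t)
      = ∏ t, (U (p.1 t) (q.1 t) * (if p.2 t = q.2 t then (1:ℂ) else 0)) := by
        refine Finset.prod_congr rfl fun t _ => ?_
        rw [Matrix.kroneckerMap_apply, Matrix.one_apply]
    _ = (∏ t, U (p.1 t) (q.1 t)) * ∏ t, (if p.2 t = q.2 t then (1:ℂ) else 0) :=
        Finset.prod_mul_distrib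
    _ = (∏ t, U (p.1 t) (q.1 t)) * (if p.2 = q.2 then 1 else 0) := by
        rw [prod_ite_one]
        exact congrArg _ (if_congr funext_iff.symm rfl rfl)

end TPowLemmas

section SteerLayer
open Complex
set_option linter.unusedSectionVars false
set_option maxHeartbeats 1000000

variable {ιA ιB : Type} [Fintype ιA] [Fintype ιB] [DecidableEq ιA] [DecidableEq ιB]

lemma ptraceA_apply (M : Matrix (ιA × ιB) (ιA × ιB) ℂ) (j j' : ιB) :
    ptraceA M j j' = ∑ i, M (i, j) (i, j') := rfl

lemma mul_kron_one_apply (ρ : Matrix (ιA × ιB) (ιA × ιB) ℂ) (E : HMat ιA) (i : ιA) (j j' : ιB) :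
    (ρ * (E ⊗ₖ (1 : HMat ιB))) (i, j') (i, j) = ∑ i', ρ (i, j') (i', j) * E i' i := by
  rw [Matrix.mul_apply, Fintype.sum_prod_type]
  refine Finset.sum_congr rfl fun i' _ => ?_
  rw [Finset.sum_eq_single j (fun l _ hl => by
      rw [Matrix.kroneckerMap_apply, Matrix.one_apply, if_neg hl, mul_zero, mul_zero])
    (fun hm => absurd (Finset.mem_univ _) hm)]
  rw [Matrix.kroneckerMap_apply, Matrix.one_apply, if_pos rfl, mul_one]

lemma trace_ptraceA_right (M : Matrix (ιA × ιB) (ιA × ιB) ℂ) (G : HMat ιB) :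
    (G * ptraceA M).trace = (M * ((1 : HMat ιA) ⊗ₖ G)).trace := by
  have lhs : (G * ptraceA M).trace = ∑ j : ιB, ∑ j' : ιB, ∑ i : ιA, G j j' * M (i, j') (i, j) := by
    rw [Matrix.trace]
    refine Finset.sum_congr rfl fun j _ => ?_
    rw [Matrix.diag, Matrix.mul_apply]
    refine Finset.sum_congr rfl fun j' _ => ?_
    rw [ptraceA_apply, Finset.mul_sum]
  have rhs : (M * ((1 : HMat ιA) ⊗ₖ G)).trace
      = ∑ i : ιA, ∑ j : ιB, ∑ j' : ιB, M (i, j) (i, j') * G j' j := by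
    rw [Matrix.trace, Fintype.sum_prod_type]
    refine Finset.sum_congr rfl fun i _ => Finset.sum_congr rfl fun j _ => ?_
    rw [Matrix.diag, Matrix.mul_apply, Fintype.sum_prod_type]
    rw [Finset.sum_eq_single i (fun i' _ hi' => by
        refine Finset.sum_eq_zero fun j' _ => ?_
        rw [Matrix.kroneckerMap_apply, Matrix.one_apply,
          if_neg (fun hh : i' = i => hi' hh), zero_mul, mul_zero])
      (fun hm => absurd (Finset.mem_univ _) hm)]
    refine Finset.sum_congr rfl fun j' _ => ?_
    rw [Matrix.kroneckerMap_apply, Matrix.one_apply, if_pos rfl, one_mul]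
  have reorder : ∀ (f : ιB → ιB → ιA → ℂ),
      ∑ j, ∑ j', ∑ i, f j j' i = ∑ i, ∑ j, ∑ j', f j j' i := by
    intro f
    calc ∑ j, ∑ j', ∑ i, f j j' i
        = ∑ j, ∑ i, ∑ j', f j j' i := Finset.sum_congr rfl fun j _ => Finset.sum_comm
      _ = ∑ i, ∑ j, ∑ j', f j j' i := Finset.sum_comm
  rw [lhs, rhs, reorder (fun j j' i => G j j' * M (i, j') (i, j))]
  refine Finset.sum_congr rfl fun i _ => ?_
  rw [Finset.sum_comm]
  refine Finset.sum_congr rfl fun j _ => Finset.sum_congr rfl fun j' _ => ?_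
  ring

lemma trace_mul_ptraceA (ρ : Matrix (ιA × ιB) (ιA × ιB) ℂ) (E : HMat ιA) (G : HMat ιB) :
    (G * ptraceA (ρ * (E ⊗ₖ (1 : HMat ιB)))).trace = (ρ * (E ⊗ₖ G)).trace := by
  rw [trace_ptraceA_right, mul_assoc, ← Matrix.mul_kronecker_mul, mul_one, one_mul]

noncomputable def outerY (x : ιB → ℂ) : HMat ιB := Matrix.of fun j j' => x j * star (x j')

lemma outerY_psd (x : ιB → ℂ) : (outerY x).PosSemidef := by
  rw [show outerY x = (Matrix.of fun (_ : Unit) (j : ιB) => star (x j))ᴴ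
      * (Matrix.of fun (_ : Unit) (j : ιB) => star (x j)) from by
    ext j j'
    rw [Matrix.mul_apply]
    simp [Matrix.conjTranspose_apply, outerY]]
  exact Matrix.posSemidef_conjTranspose_mul_self _

lemma dot_eq_trace (σ : HMat ιB) (x : ιB → ℂ) :
    dotProduct (star x) (σ *ᵥ x) = (σ * outerY x).trace := by
  rw [dotProduct, Matrix.trace]
  refine Finset.sum_congr rfl fun j _ => ?_
  rw [Matrix.mulVec, dotProduct, Matrix.diag, Matrix.mul_apply, Finset.mul_sum]
  refine Finset.sum_congr rfl fun j' _ => ?_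
  show star (x j) * (σ j j' * x j') = σ j j' * (x j' * star (x j))
  ring

lemma ptraceA_herm {ρ : Matrix (ιA × ιB) (ιA × ιB) ℂ} {E : HMat ιA}
    (hρ : ρ.IsHermitian) (hE : E.IsHermitian) :
    (ptraceA (ρ * (E ⊗ₖ (1 : HMat ιB)))).IsHermitian := by
  have hρ' : ∀ p q, star (ρ p q) = ρ q p := fun p q => by
    rw [← Matrix.conjTranspose_apply, hρ]
  have hE' : ∀ p q, star (E p q) = E q p := fun p q => by
    rw [← Matrix.conjTranspose_apply, hE]
  have key : ∀ j j', ptraceA (ρ * (E ⊗ₖ (1 : HMat ιB))) j j'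
      = ∑ i, ∑ i', ρ (i, j) (i', j') * E i' i := by
    intro j j'
    rw [ptraceA_apply]
    exact Finset.sum_congr rfl fun i _ => mul_kron_one_apply ρ E i j' j
  show (ptraceA (ρ * (E ⊗ₖ (1 : HMat ιB))))ᴴ = ptraceA (ρ * (E ⊗ₖ (1 : HMat ιB)))
  ext j j'
  rw [Matrix.conjTranspose_apply, key j' j, key j j']
  simp only [star_sum, star_mul', hρ', hE']
  rw [Finset.sum_comm]

lemma ptraceA_psd {ρ : Matrix (ιA × ιB) (ιA × ιB) ℂ} {E : HMat ιA}
    (hρ : ρ.PosSemidef) (hE : E.PosSemidef) :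
    (ptraceA (ρ * (E ⊗ₖ (1 : HMat ιB)))).PosSemidef := by
  refine Matrix.posSemidef_iff_dotProduct_mulVec.mpr ⟨ptraceA_herm hρ.1 hE.1, fun x => ?_⟩
  rw [dot_eq_trace, Matrix.trace_mul_comm, trace_mul_ptraceA]
  exact trace_psd_pair_nonneg hρ (kron_psd hE (outerY_psd x))

lemma ptraceA_sum {γ : Type} (s : Finset γ) (f : γ → Matrix (ιA × ιB) (ιA × ιB) ℂ) :
    ptraceA (∑ i ∈ s, f i) = ∑ i ∈ s, ptraceA (f i) := by
  ext j j'
  rw [ptraceA_apply]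
  simp only [Matrix.sum_apply]
  rw [Finset.sum_comm]
  rfl

lemma ptraceA_trace (M : Matrix (ιA × ιB) (ιA × ιB) ℂ) :
    (ptraceA M).trace = M.trace := by
  rw [Matrix.trace, Matrix.trace, Fintype.sum_prod_type, Finset.sum_comm]
  rfl

variable {A X : Type} [Fintype A] [Fintype X]

lemma inducedAssemblage_isAssemblage {ρ : Matrix (ιA × ιB) (ιA × ιB) ℂ}
    (hρ : IsDensity ρ) {E : A → X → HMat ιA} (hE : IsPOVM E) :
    IsAssemblage (inducedAssemblage ρ E) := by
  have hsum : ∀ x, ∑ a, inducedAssemblage ρ E a x = ptraceA ρ := by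
    intro x
    rw [show (∑ a, inducedAssemblage ρ E a x) = ∑ a, ptraceA (ρ * ((E a x) ⊗ₖ (1 : HMat ιB)))
      from rfl]
    rw [← ptraceA_sum, ← Matrix.mul_sum, ← sum_kron, hE.2 x, Matrix.one_kronecker_one, mul_one]
  refine ⟨fun a x => ptraceA_psd hρ.1 (hE.1 a x), fun x x' => by rw [hsum, hsum], fun x => ?_⟩
  rw [hsum, ptraceA_trace, hρ.2]

lemma unsteerable_conj {σ : A → X → HMat ιB} (h : IsUnsteerable σ) {V : HMat ιB}
    (hV : Vᴴ * V = 1) : IsUnsteerable (fun a x => V * σ a x * Vᴴ) := by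
  obtain ⟨n, w, p, τ, hw, hw1, hp, hp1, hτ, hσ⟩ := h
  refine ⟨n, w, p, fun l => V * τ l * Vᴴ, hw, hw1, hp, hp1, fun l => ?_, fun a x => ?_⟩
  · refine ⟨(hτ l).1.mul_mul_conjTranspose_same V, ?_⟩
    rw [Matrix.trace_mul_cycle, hV, one_mul, (hτ l).2]
  · show V * σ a x * Vᴴ = ∑ l, (w l * p a x l) • (V * τ l * Vᴴ)
    rw [hσ a x, Matrix.mul_sum, Matrix.sum_mul]
    refine Finset.sum_congr rfl fun l _ => ?_
    rw [Matrix.mul_smul, Matrix.smul_mul]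

lemma assemblage_conj {σ : A → X → HMat ιB} (h : IsAssemblage σ) {V : HMat ιB}
    (hV : Vᴴ * V = 1) : IsAssemblage (fun a x => V * σ a x * Vᴴ) := by
  obtain ⟨h1, h2, h3⟩ := h
  refine ⟨fun a x => (h1 a x).mul_mul_conjTranspose_same V, fun x x' => ?_, fun x => ?_⟩
  · have : ∀ x'', (∑ a, V * σ a x'' * Vᴴ) = V * (∑ a, σ a x'') * Vᴴ := by
      intro x''
      rw [Matrix.mul_sum, Matrix.sum_mul]
    rw [this, this, h2 x x']
  · have : (∑ a, V * σ a x * Vᴴ) = V * (∑ a, σ a x) * Vᴴ := by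
      rw [Matrix.mul_sum, Matrix.sum_mul]
    rw [this, Matrix.trace_mul_cycle, hV, one_mul, h3 x]

lemma povm_conj {E : A → X → HMat ιA} (hE : IsPOVM E) {K : HMat ιA}
    (hK : Kᴴ * K = 1) : IsPOVM (fun a x => Kᴴ * E a x * K) := by
  refine ⟨fun a x => (hE.1 a x).conjTranspose_mul_mul_same K, fun x => ?_⟩
  rw [show (∑ a, Kᴴ * E a x * K) = Kᴴ * (∑ a, E a x) * K from by
    rw [Matrix.mul_sum, Matrix.sum_mul], hE.2 x, mul_one, hK]

variable {F : A → X → HMat ιB}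

lemma assemblage_trace_re {σ : A → X → HMat ιB} (hσ : IsAssemblage σ) (a : A) (x : X) :
    0 ≤ ((σ a x).trace).re ∧ ((σ a x).trace).re ≤ 1 := by
  have h1 : ∀ a' : A, 0 ≤ ((σ a' x).trace).re := fun a' => (psd_trace_real (hσ.1 a' x)).2
  have hsum : ∑ a', ((σ a' x).trace).re = 1 := by
    have := hσ.2.2 x
    rw [Matrix.trace_sum] at this
    have := congrArg Complex.re this
    rwa [Complex.re_sum] at this
  exact ⟨h1 a, hsum ▸ Finset.single_le_sum (fun a' _ => h1 a') (Finset.mem_univ a)⟩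

lemma steeringValue_le_bound [Fintype X] (hF : IsSteeringFunctional F)
    {σ : A → X → HMat ιB} (hσ : IsAssemblage σ) :
    steeringValue F σ ≤ ∑ x, ∑ a, ((F a x).trace).re := by
  refine Finset.sum_le_sum fun x _ => Finset.sum_le_sum fun a _ => ?_
  calc ((F a x * σ a x).trace).re
      ≤ ((F a x).trace).re * ((σ a x).trace).re := trace_psd_pair_le (hF a x) (hσ.1 a x)
    _ ≤ ((F a x).trace).re * 1 := by
        refine mul_le_mul_of_nonneg_left (assemblage_trace_re hσ a x).2 ?_
        exact (psd_trace_real (hF a x)).2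
    _ = ((F a x).trace).re := mul_one _

lemma unsteerable_value_le (hF : IsSteeringFunctional F) {σ : A → X → HMat ιB}
    (h1 : IsAssemblage σ) (h2 : IsUnsteerable σ) :
    steeringValue F σ ≤ steeringBound F := by
  apply le_csSup
  · refine ⟨∑ x, ∑ a, ((F a x).trace).re, ?_⟩
    rintro r ⟨σ', hA, _, rfl⟩
    exact steeringValue_le_bound hF hA
  · exact ⟨σ, h1, h2, rfl⟩

lemma steeringValue_induced (ρb : Matrix (ιA × ιB) (ιA × ιB) ℂ)
    (E : A → X → HMat ιA) :
    steeringValue F (inducedAssemblage ρb E)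
      = ((ρb * (∑ x, ∑ a, (E a x) ⊗ₖ (F a x))).trace).re := by
  rw [steeringValue, Matrix.mul_sum, Matrix.trace_sum, Complex.re_sum]
  refine Finset.sum_congr rfl fun x _ => ?_
  rw [Matrix.mul_sum, Matrix.trace_sum, Complex.re_sum]
  refine Finset.sum_congr rfl fun a _ => ?_
  exact congrArg Complex.re (trace_mul_ptraceA ρb (E a x) (F a x))

end SteerLayer

section MainAux
open Complex
set_option linter.unusedSectionVars false
set_option maxHeartbeats 1000000

variable {n : Type} [Fintype n]

lemma trace_sandwich (ρb M X : Matrix n n ℂ) :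
    (ρb * (Mᴴ * X * M)).trace = ((M * ρb * Mᴴ) * X).trace := by
  calc (ρb * (Mᴴ * X * M)).trace
      = ((ρb * (Mᴴ * X)) * M).trace := by rw [show ρb * (Mᴴ * X * M) = (ρb * (Mᴴ * X)) * M by
        noncomm_ring]
    _ = (M * (ρb * (Mᴴ * X))).trace := Matrix.trace_mul_comm _ _
    _ = ((M * ρb * Mᴴ) * X).trace := by rw [show M * (ρb * (Mᴴ * X)) = (M * ρb * Mᴴ) * X by
        noncomm_ring]

lemma trace_conj_out (F σ V : Matrix n n ℂ) :
    (F * (V * σ * Vᴴ)).trace = ((Vᴴ * F * V) * σ).trace := by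
  calc (F * (V * σ * Vᴴ)).trace
      = ((F * V * σ) * Vᴴ).trace := by rw [show F * (V * σ * Vᴴ) = (F * V * σ) * Vᴴ by
        noncomm_ring]
    _ = (Vᴴ * (F * V * σ)).trace := Matrix.trace_mul_comm _ _
    _ = ((Vᴴ * F * V) * σ).trace := by rw [show Vᴴ * (F * V * σ) = (Vᴴ * F * V) * σ by
        noncomm_ring]

lemma psd_real_smul {M : Matrix n n ℂ} (hM : M.PosSemidef) {c : ℝ} (hc : 0 ≤ c) :
    (c • M).PosSemidef := by
  rw [Matrix.posSemidef_iff_dotProduct_mulVec] at hM ⊢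
  constructor
  · show (c • M)ᴴ = c • M
    ext i j
    rw [Matrix.conjTranspose_apply, Matrix.smul_apply, Matrix.smul_apply, star_smul,
      star_trivial, ← Matrix.conjTranspose_apply, hM.1]
  · intro x
    rw [Matrix.smul_mulVec, dotProduct_smul, Complex.real_smul]
    exact mul_nonneg (by rw [Complex.le_def]; simp [hc]) (hM.2 x)

lemma ofreal_nonneg_c {c : ℝ} (hc : 0 ≤ c) : (0:ℂ) ≤ (c : ℂ) := by
  rw [Complex.le_def]; simp [hc]

end MainAux

section MaxEntTrace
open Complex
set_option linter.unusedSectionVars false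
set_option maxHeartbeats 1000000
variable {ι : Type} [Fintype ι] [DecidableEq ι]

lemma trace_maxEnt_one_kron (G : HMat ι) :
    (maxEnt ι * ((1 : HMat ι) ⊗ₖ G)).trace = ((Fintype.card ι : ℂ))⁻¹ * G.trace := by
  have hdiag : ∀ p q : ι, (maxEnt ι * ((1 : HMat ι) ⊗ₖ G)) (p, q) (p, q)
      = if p = q then ((Fintype.card ι : ℂ))⁻¹ * ∑ r, (1 : HMat ι) r p * G r p else 0 := by
    intro p q
    rw [Matrix.mul_apply, Fintype.sum_prod_type]
    by_cases hp : p = q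
    · subst hp
      rw [if_pos rfl, Finset.mul_sum]
      refine Finset.sum_congr rfl fun r _ => ?_
      rw [Finset.sum_eq_single r (fun s _ hs => by
          rw [maxEnt_apply (p, p) (r, s), if_neg (fun hh => hs hh.2.symm), zero_mul])
        (fun hm => absurd (Finset.mem_univ _) hm)]
      rw [maxEnt_apply (p, p) (r, r), if_pos ⟨rfl, rfl⟩, Matrix.kroneckerMap_apply]
    · rw [if_neg hp]
      refine Finset.sum_eq_zero fun r _ => Finset.sum_eq_zero fun s _ => ?_
      rw [maxEnt_apply (p, q) (r, s), if_neg (fun hh => hp hh.1), zero_mul]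
  rw [Matrix.trace, Fintype.sum_prod_type]
  calc ∑ p : ι, ∑ q : ι, Matrix.diag (maxEnt ι * ((1 : HMat ι) ⊗ₖ G)) (p, q)
      = ∑ p : ι, ((Fintype.card ι : ℂ))⁻¹ * ∑ r, (1 : HMat ι) r p * G r p := by
        refine Finset.sum_congr rfl fun p _ => ?_
        rw [Finset.sum_eq_single p (fun q _ hq => by
            show (maxEnt ι * ((1 : HMat ι) ⊗ₖ G)) (p, q) (p, q) = 0
            rw [hdiag p q, if_neg (fun hh => hq hh.symm)])
          (fun hm => absurd (Finset.mem_univ _) hm)]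
        show (maxEnt ι * ((1 : HMat ι) ⊗ₖ G)) (p, p) (p, p) = _
        rw [hdiag p p, if_pos rfl]
    _ = ((Fintype.card ι : ℂ))⁻¹ * G.trace := by
        rw [← Finset.mul_sum]
        congr 1
        rw [Matrix.trace]
        refine Finset.sum_congr rfl fun p _ => ?_
        rw [Finset.sum_eq_single p (fun r _ hr => by rw [Matrix.one_apply, if_neg hr, zero_mul])
          (fun hm => absurd (Finset.mem_univ _) hm)]
        rw [Matrix.one_apply, if_pos rfl, one_mul]
        rfl

end MaxEntTrace

set_option maxHeartbeats 2000000

/-- if `F(ρ) > [1 / LV_s(|Ψ_{d^k}⁺⟩⟨Ψ_{d^k}⁺|, F)]^{1/k}` then `ρ^⊗k`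
(regrouped as a bipartite state on `ℂ^{d^k} ⊗ ℂ^{d^k}`) is steerable from Alice to Bob. -/
theorem stmt5 {A X : Type} [Fintype A] [Fintype X] [Nonempty A] [Nonempty X]
    (d k : ℕ) (hd : 0 < d) (hk : 1 ≤ k)
    (ρ : Matrix (Fin d × Fin d) (Fin d × Fin d) ℂ) (hρ : IsDensity ρ)
    (F : A → X → HMat (Fin k → Fin d)) (hF : IsSteeringFunctional F)
    (hωs : 0 < steeringBound F)
    (h : fef ρ > (1 / LVs (maxEnt (Fin k → Fin d)) F) ^ ((1 : ℝ) / k)) :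
    ∃ (A' X' : Type) (_ : Fintype A') (_ : Fintype X')
      (E : A' → X' → HMat (Fin k → Fin d)),
      IsPOVM E ∧ ¬ IsUnsteerable (inducedAssemblage (tensorPower ρ k) E) := by
  classical
  haveI : NeZero d := ⟨hd.ne'⟩
  by_contra hcon
  have hAll : ∀ (E : A → X → HMat (Fin k → Fin d)), IsPOVM E →
      IsUnsteerable (inducedAssemblage (tensorPower ρ k) E) := by
    intro E hE
    by_contra hns
    exact hcon ⟨A, X, inferInstance, inferInstance, E, hE, hns⟩
  -- Step 1 : extract a good unitary from the fef hypothesis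
  have hfef_ne : {r : ℝ | ∃ U : Matrix (Fin d) (Fin d) ℂ, U ∈ Matrix.unitaryGroup (Fin d) ℂ ∧
      r = ((maxEnt (Fin d) * ((U ⊗ₖ (1 : HMat (Fin d))) * ρ *
        ((U ⊗ₖ (1 : HMat (Fin d)))ᴴ))).trace).re}.Nonempty := ⟨_, 1, one_mem _, rfl⟩
  obtain ⟨r1, ⟨U, hU, hreq⟩, hr1⟩ := exists_lt_of_lt_csSup hfef_ne h
  subst hreq
  set ρ1 : Matrix (Fin d × Fin d) (Fin d × Fin d) ℂ :=
    (U ⊗ₖ (1 : HMat (Fin d))) * ρ * ((U ⊗ₖ (1 : HMat (Fin d)))ᴴ) with hρ1def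
  set p1 : ℝ := ((maxEnt (Fin d) * ρ1).trace).re with hp1def
  have hUu : Uᴴ * U = 1 := by
    have h1 := (Unitary.mem_iff).mp hU
    rw [Matrix.star_eq_conjTranspose] at h1
    exact h1.1
  have hρ1psd : ρ1.PosSemidef := hρ.1.mul_mul_conjTranspose_same _
  have hp1r := trace_psd_pair_real (maxEnt_psd (ι := Fin d)) hρ1psd
  -- Step 2 : set up the uniform POVM and a strictly positive steering value
  set cA : ℝ := ((Fintype.card A : ℝ))⁻¹ with hcAdef
  have hcA : 0 < cA := by
    rw [hcAdef]
    have : 0 < (Fintype.card A : ℝ) := by exact_mod_cast Fintype.card_pos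
    positivity
  set Eu : A → X → HMat (Fin k → Fin d) := fun _ _ => cA • (1 : HMat (Fin k → Fin d)) with hEudef
  have hcardA : ((Fintype.card A : ℝ)) ≠ 0 := by
    have : 0 < (Fintype.card A : ℝ) := by exact_mod_cast Fintype.card_pos
    exact this.ne'
  have hEuPOVM : IsPOVM Eu := by
    refine ⟨fun a x => psd_real_smul Matrix.PosSemidef.one hcA.le, fun x => ?_⟩
    rw [Finset.sum_const, Finset.card_univ, ← Nat.cast_smul_eq_nsmul ℝ, smul_smul, hcAdef,
      mul_inv_cancel₀ hcardA, one_smul]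
  set D : ℕ := Fintype.card (Fin k → Fin d) with hDdef
  have hDpos : 0 < D := by
    rw [hDdef, card_pi_eq]
    exact pow_pos hd k
  have hDR : (0:ℝ) < (D:ℝ) := by exact_mod_cast hDpos
  set cD : ℝ := ((D : ℝ))⁻¹ with hcDdef
  have hcD : 0 < cD := by rw [hcDdef]; positivity
  set τ0 : HMat (Fin k → Fin d) := cD • 1 with hτ0def
  have hτ0 : IsDensity τ0 := by
    refine ⟨psd_real_smul Matrix.PosSemidef.one hcD.le, ?_⟩
    rw [hτ0def, Matrix.trace_smul, Matrix.trace_one, hcDdef]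
    rw [show ((D:ℝ))⁻¹ • ((Fintype.card (Fin k → Fin d) : ℂ)) = ((D:ℝ))⁻¹ • ((D:ℕ):ℂ) from rfl]
    rw [Complex.real_smul]
    push_cast
    field_simp
  set σ0 : A → X → HMat (Fin k → Fin d) := fun _ _ => cA • τ0 with hσ0def
  have hσ0A : IsAssemblage σ0 := by
    refine ⟨fun a x => psd_real_smul hτ0.1 hcA.le, fun x x' => rfl, fun x => ?_⟩
    rw [Finset.sum_const, Finset.card_univ, ← Nat.cast_smul_eq_nsmul ℝ, smul_smul, hcAdef,
      mul_inv_cancel₀ hcardA, one_smul, hτ0.2]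
  have hσ0U : IsUnsteerable σ0 := by
    refine ⟨1, fun _ => 1, fun _ _ _ => cA, fun _ => τ0, fun _ => zero_le_one, by simp,
      fun _ _ _ => hcA.le, fun _ _ => ?_, fun _ => hτ0, fun a x => ?_⟩
    · rw [Finset.sum_const, Finset.card_univ, nsmul_eq_mul, hcAdef, mul_inv_cancel₀ hcardA]
    · rw [Fin.sum_univ_one, one_mul]
  have hωs_ne : {r : ℝ | ∃ σ : A → X → HMat (Fin k → Fin d), IsAssemblage σ ∧ IsUnsteerable σ ∧
      r = steeringValue F σ}.Nonempty := ⟨_, σ0, hσ0A, hσ0U, rfl⟩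
  obtain ⟨v0, ⟨σs, hσsA, hσsU, hv0eq⟩, hv0⟩ := exists_lt_of_lt_csSup hωs_ne hωs
  subst hv0eq
  have hex : ∃ x₀ a₀, 0 < ((F a₀ x₀ * σs a₀ x₀).trace).re := by
    by_contra hno
    push_neg at hno
    have hle : steeringValue F σs ≤ 0 :=
      Finset.sum_nonpos fun x _ => Finset.sum_nonpos fun a _ => hno x a
    exact absurd hv0 (not_lt.mpr hle)
  obtain ⟨x₀, a₀, hterm⟩ := hex
  have hFx0 : 0 < ((F a₀ x₀).trace).re := by
    by_contra hle
    push_neg at hle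
    have h1 : ((F a₀ x₀ * σs a₀ x₀).trace).re
        ≤ ((F a₀ x₀).trace).re * ((σs a₀ x₀).trace).re :=
      trace_psd_pair_le (hF _ _) (hσsA.1 _ _)
    nlinarith [(psd_trace_real (hσsA.1 a₀ x₀)).2, hterm]
  -- value of the uniform POVM on the maximally entangled state
  have hterm_u : ∀ (a : A) (x : X),
      ((F a x * inducedAssemblage (maxEnt (Fin k → Fin d)) Eu a x).trace).re
        = cA * (cD * ((F a x).trace).re) := by
    intro a x
    have h1 : (F a x * inducedAssemblage (maxEnt (Fin k → Fin d)) Eu a x).trace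
        = (maxEnt (Fin k → Fin d) * (Eu a x ⊗ₖ F a x)).trace :=
      trace_mul_ptraceA _ _ _
    have h2 : Eu a x ⊗ₖ F a x = cA • ((1 : HMat (Fin k → Fin d)) ⊗ₖ F a x) :=
      Matrix.smul_kronecker _ _ _
    rw [h1, h2, Matrix.mul_smul, Matrix.trace_smul, trace_maxEnt_one_kron,
      (psd_trace_real (hF a x)).1]
    rw [Complex.real_smul]
    have hc : ((cA:ℝ):ℂ) * (((Fintype.card (Fin k → Fin d) : ℂ))⁻¹
        * ((((F a x).trace).re : ℝ):ℂ)) = (((cA * (cD * ((F a x).trace).re)) : ℝ) : ℂ) := by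
      rw [hcDdef, hDdef]
      push_cast
      ring
    rw [hc]
    simp
  have hvalu : steeringValue F (inducedAssemblage (maxEnt (Fin k → Fin d)) Eu)
      = cA * (cD * (∑ x, ∑ a, ((F a x).trace).re)) := by
    rw [steeringValue]
    calc ∑ x, ∑ a, ((F a x * inducedAssemblage (maxEnt (Fin k → Fin d)) Eu a x).trace).re
        = ∑ x, ∑ a, cA * (cD * ((F a x).trace).re) :=
          Finset.sum_congr rfl fun x _ => Finset.sum_congr rfl fun a _ => hterm_u a x
      _ = cA * (cD * (∑ x, ∑ a, ((F a x).trace).re)) := by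
          rw [Finset.mul_sum, Finset.mul_sum]
          refine Finset.sum_congr rfl fun x _ => ?_
          rw [Finset.mul_sum, Finset.mul_sum]
  have hFsum_pos : 0 < ∑ x, ∑ a, ((F a x).trace).re :=
    Finset.sum_pos' (fun x _ => Finset.sum_nonneg fun a _ => (psd_trace_real (hF a x)).2)
      ⟨x₀, Finset.mem_univ _, Finset.sum_pos' (fun a _ => (psd_trace_real (hF a x₀)).2)
        ⟨a₀, Finset.mem_univ _, hFx0⟩⟩
  have hvalu_pos : 0 < steeringValue F (inducedAssemblage (maxEnt (Fin k → Fin d)) Eu) := by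
    rw [hvalu]
    positivity
  have hLSne : {r : ℝ | ∃ E : A → X → HMat (Fin k → Fin d), IsPOVM E ∧
      r = steeringFraction (inducedAssemblage (maxEnt (Fin k → Fin d)) E) F}.Nonempty :=
    ⟨_, Eu, hEuPOVM, rfl⟩
  have hkR : ((k:ℝ)) ≠ 0 := by
    have : (0:ℝ) < (k:ℝ) := by exact_mod_cast hk
    exact this.ne'
  set pk : ℝ := p1 ^ k with hpkdef
  have hEbig : ∃ E : A → X → HMat (Fin k → Fin d), IsPOVM E ∧ 0 < pk ∧
      steeringBound F / pk
        < steeringValue F (inducedAssemblage (maxEnt (Fin k → Fin d)) E) := by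
    by_cases hbdd : BddAbove {r : ℝ | ∃ E : A → X → HMat (Fin k → Fin d), IsPOVM E ∧
        r = steeringFraction (inducedAssemblage (maxEnt (Fin k → Fin d)) E) F}
    · have hL : 0 < LVs (maxEnt (Fin k → Fin d)) F := by
        have hmem := le_csSup hbdd (⟨Eu, hEuPOVM, rfl⟩ : _ ∈ {r : ℝ | ∃ E : A → X →
          HMat (Fin k → Fin d), IsPOVM E ∧
          r = steeringFraction (inducedAssemblage (maxEnt (Fin k → Fin d)) E) F})
        have hfr : 0 < steeringFraction (inducedAssemblage (maxEnt (Fin k → Fin d)) Eu) F := by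
          rw [steeringFraction]
          exact div_pos hvalu_pos hωs
        exact lt_of_lt_of_le hfr hmem
      have hc0 : (0:ℝ) ≤ (1 / LVs (maxEnt (Fin k → Fin d)) F) ^ ((1:ℝ)/k) :=
        Real.rpow_nonneg (by positivity) _
      have hp1pos : 0 < p1 := lt_of_le_of_lt hc0 hr1
      have hck : ((1 / LVs (maxEnt (Fin k → Fin d)) F) ^ ((1:ℝ)/k)) ^ k
          = 1 / LVs (maxEnt (Fin k → Fin d)) F := by
        rw [← Real.rpow_natCast ((1 / LVs (maxEnt (Fin k → Fin d)) F) ^ ((1:ℝ)/k)) k,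
          ← Real.rpow_mul (by positivity), div_mul_cancel₀ (1:ℝ) hkR, Real.rpow_one]
      have hpk_gt : 1 / LVs (maxEnt (Fin k → Fin d)) F < pk := by
        rw [← hck, hpkdef]
        exact pow_lt_pow_left₀ hr1 hc0 (by omega)
      have hpkpos : 0 < pk := by rw [hpkdef]; exact pow_pos hp1pos k
      have h1p : 1 / pk < LVs (maxEnt (Fin k → Fin d)) F := by
        rw [div_lt_iff₀ hpkpos, mul_comm]
        rw [div_lt_iff₀ hL] at hpk_gt
        linarith
      obtain ⟨rE, ⟨E, hE, hreq⟩, hrE⟩ := exists_lt_of_lt_csSup hLSne h1p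
      subst hreq
      refine ⟨E, hE, hpkpos, ?_⟩
      rw [steeringFraction] at hrE
      rw [div_lt_div_iff₀ hpkpos hωs] at hrE
      rw [div_lt_iff₀ hpkpos]
      linarith
    · have hL0 : LVs (maxEnt (Fin k → Fin d)) F = 0 := Real.sSup_of_not_bddAbove hbdd
      have hc0 : (1 / LVs (maxEnt (Fin k → Fin d)) F) ^ ((1:ℝ)/k) = 0 := by
        rw [hL0, div_zero, Real.zero_rpow (one_div_ne_zero hkR)]
      have hp1pos : 0 < p1 := by rw [hc0] at hr1; exact hr1
      have hpkpos : 0 < pk := by rw [hpkdef]; exact pow_pos hp1pos k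
      obtain ⟨rE, hrEmem, hrE⟩ := (not_bddAbove_iff.mp hbdd) (1/pk)
      obtain ⟨E, hE, hreq⟩ := hrEmem
      subst hreq
      refine ⟨E, hE, hpkpos, ?_⟩
      rw [steeringFraction] at hrE
      rw [div_lt_div_iff₀ hpkpos hωs] at hrE
      rw [div_lt_iff₀ hpkpos]
      linarith
  obtain ⟨E, hEpovm, hpkpos, hEval⟩ := hEbig
  -- Step 3 : the twirl argument
  set ρ' : Matrix ((Fin k → Fin d) × (Fin k → Fin d)) ((Fin k → Fin d) × (Fin k → Fin d)) ℂ :=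
    tensorPower ρ k with hρ'def
  have hρ'psd : ρ'.PosSemidef := tpow_psd hρ.1
  have hρ'density : IsDensity ρ' := ⟨hρ'psd, by rw [hρ'def, tpow_trace, hρ.2, one_pow]⟩
  set Ubig : HMat (Fin k → Fin d) := piT (fun _ : Fin k => U) with hUbigdef
  have hUbig : Ubigᴴ * Ubig = 1 := piT_unitary (fun _ => hUu)
  set Bst := (Ubig ⊗ₖ (1 : HMat (Fin k → Fin d))) * ρ'
    * ((Ubig ⊗ₖ (1 : HMat (Fin k → Fin d))))ᴴ with hBstdef
  have hBst_psd : Bst.PosSemidef := hρ'psd.mul_mul_conjTranspose_same _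
  have hBst_eq : Bst = tensorPower ρ1 k := by
    rw [hρ1def]
    calc (Ubig ⊗ₖ (1 : HMat (Fin k → Fin d))) * ρ' * ((Ubig ⊗ₖ (1 : HMat (Fin k → Fin d))))ᴴ
        = tensorPower (U ⊗ₖ (1 : HMat (Fin d))) k * tensorPower ρ k
            * tensorPower ((U ⊗ₖ (1 : HMat (Fin d)))ᴴ) k := by
          rw [tpow_kron_one, ← tpow_conjT, tpow_kron_one, hρ'def]
      _ = tensorPower ((U ⊗ₖ (1 : HMat (Fin d))) * ρ * ((U ⊗ₖ (1 : HMat (Fin d))))ᴴ) k := by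
          rw [tpow_mul, tpow_mul]
  have ht : (maxEnt (Fin k → Fin d) * Bst).trace = ((pk : ℝ) : ℂ) := by
    rw [hBst_eq, ← tpow_maxEnt, ← tpow_mul, tpow_trace, hp1r.1, hpkdef]
    push_cast
    rfl
  set T := ∑ x, ∑ a, (E a x) ⊗ₖ (F a x) with hTdef
  have hTpsd : T.PosSemidef :=
    psd_sum _ _ fun x _ => psd_sum _ _ fun a _ => kron_psd (hEpovm.1 a x) (hF a x)
  have hper : ∀ v : (Fin k → Fin d) × (Fin k → Fin d),
      ((((bigW v ⊗ₖ (bigW v).map (starRingEnd ℂ)) * Bst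
        * (bigW v ⊗ₖ (bigW v).map (starRingEnd ℂ))ᴴ) * T).trace).re ≤ steeringBound F := by
    intro v
    set Wb := (bigW v).map (starRingEnd ℂ) with hWbdef
    set K := bigW v * Ubig with hKdef
    have hK : Kᴴ * K = 1 := by
      rw [hKdef, Matrix.conjTranspose_mul]
      calc Ubigᴴ * (bigW v)ᴴ * (bigW v * Ubig)
          = Ubigᴴ * ((bigW v)ᴴ * bigW v) * Ubig := by noncomm_ring
        _ = 1 := by rw [bigW_unitary, mul_one, hUbig]
    have hWb : Wbᴴ * Wb = 1 := map_conj_unitary (bigW_unitary v)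
    set Ev : A → X → HMat (Fin k → Fin d) := fun a x => Kᴴ * E a x * K with hEvdef
    have hEv : IsPOVM Ev := povm_conj hEpovm hK
    have hσvA : IsAssemblage (inducedAssemblage ρ' Ev) :=
      inducedAssemblage_isAssemblage hρ'density hEv
    have hσvU : IsUnsteerable (inducedAssemblage ρ' Ev) := hAll Ev hEv
    have hτvA : IsAssemblage (fun a x => Wb * (inducedAssemblage ρ' Ev a x) * Wbᴴ) :=
      assemblage_conj hσvA hWb
    have hτvU : IsUnsteerable (fun a x => Wb * (inducedAssemblage ρ' Ev a x) * Wbᴴ) :=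
      unsteerable_conj hσvU hWb
    have hbound := unsteerable_value_le hF hτvA hτvU
    have hident : steeringValue F (fun a x => Wb * (inducedAssemblage ρ' Ev a x) * Wbᴴ)
        = ((((K ⊗ₖ Wb) * ρ' * (K ⊗ₖ Wb)ᴴ) * T).trace).re := by
      rw [steeringValue, hTdef]
      rw [show ((K ⊗ₖ Wb) * ρ' * (K ⊗ₖ Wb)ᴴ) * (∑ x, ∑ a, (E a x) ⊗ₖ (F a x))
          = ∑ x, ∑ a, ((K ⊗ₖ Wb) * ρ' * (K ⊗ₖ Wb)ᴴ) * ((E a x) ⊗ₖ (F a x)) from by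
        rw [Matrix.mul_sum]
        exact Finset.sum_congr rfl fun x _ => Matrix.mul_sum _ _ _]
      rw [Matrix.trace_sum, Complex.re_sum]
      refine Finset.sum_congr rfl fun x _ => ?_
      rw [Matrix.trace_sum, Complex.re_sum]
      refine Finset.sum_congr rfl fun a _ => ?_
      congr 1
      calc (F a x * (Wb * (inducedAssemblage ρ' Ev a x) * Wbᴴ)).trace
          = ((Wbᴴ * F a x * Wb) * (inducedAssemblage ρ' Ev a x)).trace := trace_conj_out _ _ _
        _ = (ρ' * (Ev a x ⊗ₖ (Wbᴴ * F a x * Wb))).trace :=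
            trace_mul_ptraceA ρ' (Ev a x) (Wbᴴ * F a x * Wb)
        _ = (ρ' * ((K ⊗ₖ Wb)ᴴ * ((E a x) ⊗ₖ (F a x)) * (K ⊗ₖ Wb))).trace := by
            rw [show (K ⊗ₖ Wb)ᴴ * ((E a x) ⊗ₖ (F a x)) * (K ⊗ₖ Wb)
                = (Kᴴ * E a x * K) ⊗ₖ (Wbᴴ * F a x * Wb) from by
              rw [kron_conjT, Matrix.mul_kronecker_mul, Matrix.mul_kronecker_mul]]
        _ = (((K ⊗ₖ Wb) * ρ' * (K ⊗ₖ Wb)ᴴ) * ((E a x) ⊗ₖ (F a x))).trace :=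
            trace_sandwich _ _ _
    have hKW : K ⊗ₖ Wb = (bigW v ⊗ₖ Wb) * (Ubig ⊗ₖ (1 : HMat (Fin k → Fin d))) := by
      rw [← Matrix.mul_kronecker_mul, mul_one]
    have hΘ : (K ⊗ₖ Wb) * ρ' * (K ⊗ₖ Wb)ᴴ = (bigW v ⊗ₖ Wb) * Bst * (bigW v ⊗ₖ Wb)ᴴ := by
      rw [hKW, Matrix.conjTranspose_mul, hBstdef]
      noncomm_ring
    rw [hΘ] at hident
    rw [← hident]
    exact hbound
  set Gv : (Fin k → Fin d) × (Fin k → Fin d) → Matrix _ _ ℂ :=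
    fun v => bigW v ⊗ₖ (bigW v).map (starRingEnd ℂ) with hGvdef
  set Sig := ∑ v : (Fin k → Fin d) × (Fin k → Fin d), Gv v * Bst * (Gv v)ᴴ with hSigdef
  set Ψ := maxEnt (Fin k → Fin d) with hΨdef
  have hsum_le : ((Sig * T).trace).re ≤ ((D:ℝ)^2) * steeringBound F := by
    rw [hSigdef, Matrix.sum_mul, Matrix.trace_sum, Complex.re_sum]
    calc ∑ v : (Fin k → Fin d) × (Fin k → Fin d), (((Gv v * Bst * (Gv v)ᴴ) * T).trace).re
        ≤ ∑ _v : (Fin k → Fin d) × (Fin k → Fin d), steeringBound F :=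
          Finset.sum_le_sum fun v _ => hper v
      _ = ((D:ℝ)^2) * steeringBound F := by
          rw [Finset.sum_const, Finset.card_univ, Fintype.card_prod, nsmul_eq_mul, hDdef]
          push_cast
          ring
  have hGsum : ∑ v : (Fin k → Fin d) × (Fin k → Fin d), Gv v = ((D:ℂ)^2) • Ψ := by
    rw [hGvdef, hΨdef, hDdef]
    exact bigW_sum
  have hGψ : ∀ v, Ψ * Gv v = Ψ := fun v => maxEnt_invR (bigW_unitary v)
  have hGHψ : ∀ v, (Gv v)ᴴ * Ψ = Ψ := by
    intro v
    have h1 : (Gv v)ᴴ = (bigW v)ᴴ ⊗ₖ ((bigW v)ᴴ).map (starRingEnd ℂ) := by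
      rw [hGvdef, kron_conjT, map_conj_conjT]
    rw [h1]
    exact maxEnt_invL (by rw [Matrix.conjTranspose_conjTranspose]; exact bigW_unitary v)
  have hcard_ne : (Fintype.card (Fin k → Fin d) : ℂ) ≠ 0 := card_pi_ne_zero
  have hPsiSig : Ψ * Sig = ((D:ℂ)^2 * ((pk:ℝ):ℂ)) • Ψ := by
    calc Ψ * Sig = ∑ v, Ψ * (Gv v * Bst * (Gv v)ᴴ) := Matrix.mul_sum _ _ _
      _ = ∑ v, (Ψ * Bst) * (Gv v)ᴴ := by
          refine Finset.sum_congr rfl fun v _ => ?_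
          calc Ψ * (Gv v * Bst * (Gv v)ᴴ) = (Ψ * Gv v) * Bst * (Gv v)ᴴ := by noncomm_ring
            _ = (Ψ * Bst) * (Gv v)ᴴ := by rw [hGψ v]
      _ = (Ψ * Bst) * (∑ v, (Gv v)ᴴ) := (Matrix.mul_sum _ _ _).symm
      _ = (Ψ * Bst) * (((D:ℂ)^2) • Ψ) := by
          rw [show (∑ v : (Fin k → Fin d) × (Fin k → Fin d), (Gv v)ᴴ)
              = (∑ v : (Fin k → Fin d) × (Fin k → Fin d), Gv v)ᴴ from
            (Matrix.conjTranspose_sum _ _).symm, hGsum, Matrix.conjTranspose_smul,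
            hΨdef, maxEnt_conjT]
          congr 1
          simp
      _ = ((D:ℂ)^2) • (Ψ * Bst * Ψ) := by
          rw [Matrix.mul_smul, mul_assoc]
      _ = ((D:ℂ)^2 * ((pk:ℝ):ℂ)) • Ψ := by
          rw [hΨdef, maxEnt_sandwich, ← hΨdef, ht, smul_smul]
  have hSigPsi : Sig * Ψ = ((D:ℂ)^2 * ((pk:ℝ):ℂ)) • Ψ := by
    calc Sig * Ψ = ∑ v, (Gv v * Bst * (Gv v)ᴴ) * Ψ := Matrix.sum_mul _ _ _
      _ = ∑ v, Gv v * (Bst * Ψ) := by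
          refine Finset.sum_congr rfl fun v _ => ?_
          calc (Gv v * Bst * (Gv v)ᴴ) * Ψ = (Gv v * Bst) * ((Gv v)ᴴ * Ψ) := by noncomm_ring
            _ = Gv v * (Bst * Ψ) := by rw [hGHψ v, mul_assoc]
      _ = (∑ v, Gv v) * (Bst * Ψ) := (Matrix.sum_mul _ _ _).symm
      _ = (((D:ℂ)^2) • Ψ) * (Bst * Ψ) := by rw [hGsum]
      _ = ((D:ℂ)^2) • (Ψ * Bst * Ψ) := by
          rw [Matrix.smul_mul]
          exact congrArg _ (mul_assoc Ψ Bst Ψ).symm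
      _ = ((D:ℂ)^2 * ((pk:ℝ):ℂ)) • Ψ := by
          rw [hΨdef, maxEnt_sandwich, ← hΨdef, ht, smul_smul]
  have hSigpsd : Sig.PosSemidef :=
    psd_sum _ _ fun v _ => hBst_psd.mul_mul_conjTranspose_same _
  set cc : ℂ := (D:ℂ)^2 * ((pk:ℝ):ℂ) with hccdef
  have hXeq : (1 - Ψ) * Sig * (1 - Ψ) = Sig - cc • Ψ := by
    have hA : (1 - Ψ) * Sig = Sig - cc • Ψ := by
      rw [Matrix.sub_mul, one_mul, hPsiSig]
    rw [hA, Matrix.mul_sub, mul_one]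
    have hB : (Sig - cc • Ψ) * Ψ = 0 := by
      rw [Matrix.sub_mul, hSigPsi, Matrix.smul_mul, hΨdef, maxEnt_mul_self hcard_ne, sub_self]
    rw [hB, sub_zero]
  have hXpsd : (Sig - cc • Ψ).PosSemidef := by
    rw [← hXeq]
    have h1mΨ : (1 - Ψ)ᴴ = 1 - Ψ := by
      rw [Matrix.conjTranspose_sub, Matrix.conjTranspose_one, hΨdef, maxEnt_conjT]
    rw [show (1 - Ψ) * Sig * (1 - Ψ) = (1 - Ψ) * Sig * (1 - Ψ)ᴴ from by rw [h1mΨ]]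
    exact hSigpsd.mul_mul_conjTranspose_same _
  have hΨT : ((Ψ * T).trace).re
      = steeringValue F (inducedAssemblage (maxEnt (Fin k → Fin d)) E) := by
    rw [steeringValue_induced, hΨdef, hTdef]
  have hXT := trace_psd_pair_real hXpsd hTpsd
  have hdecomp : ((Sig * T).trace).re
      = (((Sig - cc • Ψ) * T).trace).re + ((D:ℝ)^2) * pk * ((Ψ * T).trace).re := by
    have hsplit : Sig * T = (Sig - cc • Ψ) * T + cc • (Ψ * T) := by
      rw [Matrix.sub_mul, Matrix.smul_mul, sub_add_cancel]
    rw [hsplit, Matrix.trace_add, Complex.add_re, Matrix.trace_smul, smul_eq_mul]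
    congr 1
    rw [show cc = (((((D:ℝ))^2 * pk) : ℝ) : ℂ) from by rw [hccdef]; push_cast; ring]
    rw [Complex.re_ofReal_mul]
  have hfinal : ((D:ℝ)^2) * steeringBound F < ((Sig * T).trace).re := by
    rw [hdecomp]
    have h1 : ((D:ℝ)^2) * pk * (steeringBound F / pk)
        < ((D:ℝ)^2) * pk * ((Ψ * T).trace).re := by
      apply mul_lt_mul_of_pos_left _ (by positivity)
      rw [hΨT]
      exact hEval
    have h2 : ((D:ℝ)^2) * pk * (steeringBound F / pk) = ((D:ℝ)^2) * steeringBound F := by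
      rw [mul_assoc, mul_comm pk (steeringBound F / pk), div_mul_cancel₀ _ hpkpos.ne']
    linarith [hXT.2]
  exact absurd hfinal (not_lt.mpr hsum_le)


end QSteer

end
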